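/- arXiv:1702.08156 — 9 statements merged into one kernel-verified Lean document; each statement's English description precedes it below -/
import Mathlib

section
/- For any two distinct positive integers m and n, there exists a unique infinite sequence K with values in {m, n} whose first term is m and which equals the sequence of run-lengths of itself, i.e., R(K) = K. -/
/-- `InfRunLengthsIs s r` : the infinite sequence `r` is the sequence of run-lengths
of the infinite sequence `s` (witnessed by the sequence `b` of block boundaries). -/
def InfRunLengthsIs (s r : ℕ → ℕ) : Prop :=
  ∃ b : ℕ → ℕ, b 0 = 0 ∧ StrictMono b ∧
    (∀ k i, b k ≤ i → i < b (k + 1) → s i = s (b k)) ∧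
    (∀ k, s (b (k + 1)) ≠ s (b k)) ∧
    (∀ k, r k = b (k + 1) - b k)

namespace Kola

/-- value of the `k`-th run -/
def v (m n k : ℕ) : ℕ := if Even k then m else n

/-- given the list `[c 0, …, c (i-1)]` of run indices, compute `c i` -/
def next (m n : ℕ) (l : List ℕ) : ℕ :=
  if l = [] then 0
  else
    if (∑ j ∈ Finset.range (l.getLastD 0 + 1), v m n (l.getD j 0)) = l.length then
      l.getLastD 0 + 1
    else l.getLastD 0

def cL (m n : ℕ) : ℕ → List ℕ
  | 0 => []
  | i + 1 => cL m n i ++ [next m n (cL m n i)]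

/-- run index of position `i` -/
def c (m n i : ℕ) : ℕ := next m n (cL m n i)

/-- the Kolakoski-type sequence -/
def K (m n i : ℕ) : ℕ := v m n (c m n i)

/-- block boundaries -/
def b (m n k : ℕ) : ℕ := ∑ j ∈ Finset.range k, K m n j

theorem length_cL (m n i : ℕ) : (cL m n i).length = i := by
  induction i with
  | zero => rfl
  | succ i ih => simp [cL, ih]

theorem getD_cL (m n : ℕ) : ∀ {i j : ℕ}, j < i → (cL m n i).getD j 0 = c m n j := by
  intro i
  induction i with
  | zero => omega
  | succ i ih =>
    intro j hj
    rw [cL]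
    rcases lt_or_eq_of_le (Nat.lt_succ_iff.mp hj) with h | h
    · rw [List.getD_append _ _ _ _ (by rw [length_cL]; exact h)]
      exact ih h
    · subst h
      have h2 : (cL m n j ++ [next m n (cL m n j)]).getD (cL m n j).length 0
          = next m n (cL m n j) := by simp [List.getD]
      rw [length_cL] at h2
      exact h2

theorem c_zero (m n : ℕ) : c m n 0 = 0 := by simp [c, cL, next]

theorem next_le (m n : ℕ) (l : List ℕ) : next m n l ≤ l.getLastD 0 + 1 := by
  unfold next
  split
  · omega
  · split <;> omega

theorem c_le (m n i : ℕ) : c m n i ≤ i := by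
  induction i with
  | zero => exact le_of_eq (c_zero m n)
  | succ i ih =>
    have h := next_le m n (cL m n (i + 1))
    rw [show cL m n (i + 1) = cL m n i ++ [next m n (cL m n i)] from rfl,
      List.getLastD_concat] at h
    have h2 : c m n (i + 1) ≤ c m n i + 1 := h
    omega

theorem K_pos (m n : ℕ) (hm : 0 < m) (hn : 0 < n) (i : ℕ) : 0 < K m n i := by
  unfold K v; split <;> assumption

theorem b_succ (m n k : ℕ) : b m n (k + 1) = b m n k + K m n k :=
  Finset.sum_range_succ _ _

theorem b_mono (m n : ℕ) (hm : 0 < m) (hn : 0 < n) : StrictMono (b m n) :=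
  strictMono_nat_of_lt_succ fun k => by
    have := K_pos m n hm hn k; rw [b_succ]; omega

theorem le_b (m n : ℕ) (hm : 0 < m) (hn : 0 < n) (k : ℕ) : k ≤ b m n k := by
  induction k with
  | zero => exact Nat.zero_le _
  | succ k ih => have := K_pos m n hm hn k; rw [b_succ]; omega

theorem c_succ (m n i : ℕ) :
    c m n (i + 1) = if b m n (c m n i + 1) = i + 1 then c m n i + 1 else c m n i := by
  have hsum : (∑ j ∈ Finset.range (c m n i + 1),
      v m n ((cL m n i ++ [next m n (cL m n i)]).getD j 0)) = b m n (c m n i + 1) := by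
    apply Finset.sum_congr rfl
    intro j hj
    rw [Finset.mem_range] at hj
    have hle := c_le m n i
    rw [show cL m n i ++ [next m n (cL m n i)] = cL m n (i + 1) from rfl,
      getD_cL m n (by omega : j < i + 1)]
    rfl
  have hlast : (cL m n i ++ [next m n (cL m n i)]).getLastD 0 = c m n i :=
    List.getLastD_concat
  have hlen : (cL m n i ++ [next m n (cL m n i)]).length = i + 1 := by
    simp [length_cL]
  conv_lhs => rw [c, cL]
  rw [next, if_neg (by simp), hlast, hsum, hlen]

theorem inv (m n : ℕ) (hm : 0 < m) (hn : 0 < n) (i : ℕ) :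
    b m n (c m n i) ≤ i ∧ i < b m n (c m n i + 1) := by
  induction i with
  | zero =>
    rw [c_zero]
    constructor
    · simp [b]
    · have := K_pos m n hm hn 0
      simp [b, Finset.sum_range_one]
      omega
  | succ i ih =>
    rw [c_succ]
    split
    · next h =>
      constructor
      · omega
      · rw [b_succ]
        have := K_pos m n hm hn (c m n i + 1)
        omega
    · next h => omega

theorem runIdx_eq (m n : ℕ) (hm : 0 < m) (hn : 0 < n) {k i : ℕ}
    (h1 : b m n k ≤ i) (h2 : i < b m n (k + 1)) : c m n i = k := by
  have hinv := inv m n hm hn i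
  have hb := b_mono m n hm hn
  have h3 : b m n (c m n i) < b m n (k + 1) := lt_of_le_of_lt hinv.1 h2
  have h4 : b m n k < b m n (c m n i + 1) := lt_of_le_of_lt h1 hinv.2
  have := hb.lt_iff_lt.mp h3
  have := hb.lt_iff_lt.mp h4
  omega

theorem c_b (m n : ℕ) (hm : 0 < m) (hn : 0 < n) (k : ℕ) : c m n (b m n k) = k :=
  runIdx_eq m n hm hn le_rfl (b_mono m n hm hn (lt_add_one k))

theorem v_mem (m n k : ℕ) : v m n k = m ∨ v m n k = n := by
  unfold v; split; exacts [Or.inl rfl, Or.inr rfl]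

theorem v_succ_ne (m n : ℕ) (hmn : m ≠ n) (k : ℕ) : v m n (k + 1) ≠ v m n k := by
  unfold v
  by_cases h : Even k <;> simp [h, Nat.even_add_one] <;> omega

theorem eq_v_succ (m n : ℕ) (k : ℕ) {x : ℕ} (hx : x = m ∨ x = n)
    (hne : x ≠ v m n k) : x = v m n (k + 1) := by
  unfold v at hne ⊢
  by_cases h : Even k <;> simp [h, Nat.even_add_one] at hne ⊢ <;> rcases hx with h' | h' <;> omega

end Kola

/-- For any two distinct positive integers `m` and `n`, there exists a unique infinite
sequence `K` with values in `{m, n}` whose first term is `m` and which equals the sequence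
of run-lengths of itself. -/
theorem exists_unique_kolakoski (m n : ℕ) (hm : 0 < m) (hn : 0 < n) (hmn : m ≠ n) :
    ∃! K : ℕ → ℕ, (∀ i, K i = m ∨ K i = n) ∧ K 0 = m ∧ InfRunLengthsIs K K := by
  refine ⟨Kola.K m n, ⟨fun i => Kola.v_mem m n _, ?_, ?_⟩, ?_⟩
  · show Kola.v m n (Kola.c m n 0) = m
    rw [Kola.c_zero]; simp [Kola.v]
  · refine ⟨Kola.b m n, ?_, Kola.b_mono m n hm hn, ?_, ?_, ?_⟩
    · simp [Kola.b]
    · intro k i hki hik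
      show Kola.v m n (Kola.c m n i) = Kola.v m n (Kola.c m n (Kola.b m n k))
      rw [Kola.runIdx_eq m n hm hn hki hik, Kola.c_b m n hm hn]
    · intro k
      show Kola.v m n (Kola.c m n (Kola.b m n (k + 1))) ≠
        Kola.v m n (Kola.c m n (Kola.b m n k))
      rw [Kola.c_b m n hm hn, Kola.c_b m n hm hn]
      exact Kola.v_succ_ne m n hmn k
    · intro k
      rw [Kola.b_succ]; omega
  · rintro K' ⟨h1, h2, b', hb0, hmono, hconst, halt, hlen⟩
    have hbadd : ∀ k, b' (k + 1) = b' k + K' k := by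
      intro k
      have ha := hlen k
      have hb := hmono (lt_add_one k)
      omega
    have hKb : ∀ k, K' (b' k) = Kola.v m n k := by
      intro k; induction k with
      | zero => rw [hb0, h2]; simp [Kola.v]
      | succ k ih =>
        have hne := halt k
        rw [ih] at hne
        exact Kola.eq_v_succ m n k (h1 _) hne
    have hbb : ∀ k, b' k = Kola.b m n k := by
      intro k
      induction k using Nat.strong_induction_on with
      | _ k ih =>
        match k with
        | 0 => rw [hb0]; simp [Kola.b]
        | k + 1 =>
          have hinv := Kola.inv m n hm hn k
          set j := Kola.c m n k with hj
          have hjk : j ≤ k := Kola.c_le m n k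
          have hb'j : b' j = Kola.b m n j := ih j (by omega)
          have hk2 : k < b' (j + 1) := by
            rcases lt_or_eq_of_le hjk with hlt | heq
            · rw [ih (j + 1) (by omega)]; exact hinv.2
            · have h6 : b' k < b' (k + 1) := hmono (lt_add_one k)
              have h7 : k ≤ Kola.b m n k := Kola.le_b m n hm hn k
              rw [heq] at hb'j ⊢
              omega
          have hK'k : K' k = Kola.K m n k := by
            have hc := hconst j k (by rw [hb'j]; exact hinv.1) hk2
            rw [hc, hKb j]
            rfl
          rw [hbadd, ih k (lt_add_one k), hK'k, Kola.b_succ]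
    funext i
    have hinv := Kola.inv m n hm hn i
    have hc := hconst (Kola.c m n i) i (by rw [hbb]; exact hinv.1) (by rw [hbb]; exact hinv.2)
    rw [hc, hKb]
    rfl
end

section
/- Let m and n be distinct positive integers and let t be a nonempty (finite or infinite) sequence of positive integers. Then there exist exactly two sequences s with values in {m, n} such that R(s) = t: one with first term m and one with first term n, and these two sequences are complements of each other (they have the same length and corresponding terms sum to m + n). -/
/-- Auxiliary function for computing run-lengths of a finite sequence:
`a` is the value of the current run and `cnt` its length so far. -/
def runLengthsAux (a cnt : ℕ) : List ℕ → List ℕ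
  | [] => [cnt]
  | b :: l => if b = a then runLengthsAux a (cnt + 1) l else cnt :: runLengthsAux b 1 l

/-- `runLengths s` : the sequence of run-lengths of the finite sequence `s`,
i.e. the lengths of the maximal blocks of consecutive equal terms of `s`, in order. -/
def runLengths : List ℕ → List ℕ
  | [] => []
  | a :: l => runLengthsAux a 1 l

/-- build x y [c₁,c₂,...] = replicate c₁ x ++ replicate c₂ y ++ ... -/
def rlBuild (x y : ℕ) : List ℕ → List ℕ
  | [] => []
  | c :: t => List.replicate c x ++ rlBuild y x t

lemma runLengthsAux_replicate (a : ℕ) :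
    ∀ (k : ℕ) (cnt : ℕ) (rest : List ℕ),
      runLengthsAux a cnt (List.replicate k a ++ rest) = runLengthsAux a (cnt + k) rest := by
  intro k
  induction k with
  | zero => intro cnt rest; simp [List.replicate]
  | succ k ih =>
    intro cnt rest
    rw [List.replicate_succ, List.cons_append]
    show runLengthsAux a cnt (a :: _) = _
    rw [runLengthsAux, if_pos rfl, ih]
    congr 1
    omega

lemma runLengthsAux_of_head_ne (a cnt : ℕ) (rest : List ℕ)
    (h : ∀ x ∈ rest.head?, x ≠ a) :
    runLengthsAux a cnt rest = cnt :: runLengths rest := by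
  cases rest with
  | nil => rfl
  | cons b l =>
    have hb : b ≠ a := h b rfl
    rw [runLengthsAux, if_neg hb]
    rfl

lemma runLengths_replicate_append (a c : ℕ) (hc : 0 < c) (rest : List ℕ)
    (h : ∀ x ∈ rest.head?, x ≠ a) :
    runLengths (List.replicate c a ++ rest) = c :: runLengths rest := by
  obtain ⟨k, rfl⟩ : ∃ k, c = k + 1 := ⟨c - 1, by omega⟩
  rw [List.replicate_succ, List.cons_append]
  show runLengthsAux a 1 _ = _
  rw [runLengthsAux_replicate, runLengthsAux_of_head_ne _ _ _ h]
  congr 1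
  omega

lemma rlBuild_head? (x y c : ℕ) (hc : 0 < c) (t : List ℕ) :
    (rlBuild x y (c :: t)).head? = some x := by
  obtain ⟨k, rfl⟩ : ∃ k, c = k + 1 := ⟨c - 1, by omega⟩
  rw [rlBuild, List.replicate_succ, List.cons_append]
  rfl

lemma mem_rlBuild : ∀ (t : List ℕ) (x y a : ℕ), a ∈ rlBuild x y t → a = x ∨ a = y := by
  intro t
  induction t with
  | nil => intro x y a h; simp [rlBuild] at h
  | cons c t ih =>
    intro x y a h
    rw [rlBuild, List.mem_append] at h
    rcases h with h | h
    · exact Or.inl (List.eq_of_mem_replicate h)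
    · exact (ih y x a h).symm

lemma rlBuild_length : ∀ (t : List ℕ) (x y : ℕ), (rlBuild x y t).length = t.sum := by
  intro t
  induction t with
  | nil => intro x y; rfl
  | cons c t ih => intro x y; simp [rlBuild, ih]

lemma runLengths_rlBuild : ∀ (t : List ℕ) (x y : ℕ), x ≠ y → (∀ a ∈ t, 0 < a) →
    runLengths (rlBuild x y t) = t := by
  intro t
  induction t with
  | nil => intro x y _ _; rfl
  | cons c t ih =>
    intro x y hxy ht
    rw [rlBuild, runLengths_replicate_append x c (ht c (by simp)) _ ?_,
      ih y x (Ne.symm hxy) (fun a ha => ht a (by simp [ha]))]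
    · intro z hz
      cases t with
      | nil => simp [rlBuild] at hz
      | cons c' t' =>
        rw [rlBuild_head? y x c' (ht c' (by simp)) t'] at hz
        simp at hz
        subst hz
        exact Ne.symm hxy

lemma rlBuild_sum : ∀ (t : List ℕ) (x y i : ℕ), i < (rlBuild x y t).length →
    (rlBuild x y t).getD i 0 + (rlBuild y x t).getD i 0 = x + y := by
  intro t
  induction t with
  | nil => intro x y i h; simp [rlBuild] at h
  | cons c t ih =>
    intro x y i h
    rw [rlBuild]
    rw [rlBuild]
    by_cases hi : i < c
    · rw [List.getD_append _ _ _ _ (by simpa using hi),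
        List.getD_append _ _ _ _ (by simpa using hi)]
      rw [List.getD_eq_getElem _ _ (by simpa using hi),
        List.getD_eq_getElem _ _ (by simpa using hi)]
      simp
    · have hl : (List.replicate c x).length ≤ i := by simpa using not_lt.mp hi
      have hl' : (List.replicate c y).length ≤ i := by simpa using not_lt.mp hi
      rw [List.getD_append_right _ _ _ _ hl, List.getD_append_right _ _ _ _ hl']
      simp only [List.length_replicate]
      have hlt : i - c < (rlBuild y x t).length := by
        rw [rlBuild_length] at h ⊢
        simp at h
        omega
      have := ih y x (i - c) hlt
      omega


lemma eq_rlBuild_aux : ∀ (N : ℕ) (x y : ℕ), x ≠ y → ∀ s : List ℕ, s.length ≤ N →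
    s ≠ [] → (∀ a ∈ s, a = x ∨ a = y) → s.headD 0 = x →
    s = rlBuild x y (runLengths s) := by
  intro N
  induction N with
  | zero =>
    intro x y hxy s hlen hne
    interval_cases h : s.length
    · exact absurd (List.length_eq_zero_iff.mp h) hne
  | succ N ih =>
    intro x y hxy s hlen hne hmem hhead
    obtain ⟨a, l, rfl⟩ := List.exists_cons_of_ne_nil hne
    obtain rfl : a = x := hhead
    set tw := (a :: l).takeWhile (· = a) with htw
    set rest := (a :: l).dropWhile (· = a) with hrest
    have hsplit : tw ++ rest = a :: l := List.takeWhile_append_dropWhile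
    have htwrep : tw = List.replicate tw.length a := by
      rw [List.eq_replicate_iff]
      refine ⟨rfl, fun b hb => ?_⟩
      have := List.mem_takeWhile_imp hb
      simpa using this
    have hc : 0 < tw.length := by
      rw [htw, List.takeWhile_cons, if_pos (by simp)]
      simp
    have hresthead : ∀ z ∈ rest.head?, z ≠ a := by
      intro z hz
      have h2 := List.head?_dropWhile_not (fun b => b = a) (a :: l)
      rw [← hrest] at h2
      rw [Option.mem_def] at hz
      rw [hz] at h2
      simpa using h2
    have hrl : runLengths (a :: l) = tw.length :: runLengths rest := by
      conv_lhs => rw [← hsplit, htwrep]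
      rw [runLengths_replicate_append a tw.length hc rest hresthead]
    rw [hrl]
    cases hr : rest with
    | nil =>
      rw [hr, List.append_nil] at hsplit
      show a :: l = List.replicate tw.length a ++ []
      rw [List.append_nil, ← hsplit]
      exact htwrep
    | cons b l' =>
      have hb : b = y := by
        have hbm : b ∈ a :: l := by
          rw [← hsplit, hr]; simp
        have hbx : b ≠ a := by
          apply hresthead
          rw [hr]; rfl
        rcases hmem b hbm with h | h
        · exact absurd h hbx
        · exact h
      have hrestmem : ∀ z ∈ rest, z = y ∨ z = a := by
        intro z hz
        have : z ∈ a :: l := by rw [← hsplit]; exact List.mem_append_right _ hz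
        exact (hmem z this).symm
      have hrestlen : rest.length ≤ N := by
        have h3 : tw.length + rest.length = l.length + 1 := by
          rw [← List.length_append, hsplit]; rfl
        simp at hlen
        omega
      have hrec := ih y a (Ne.symm hxy) rest hrestlen (by rw [hr]; simp)
        hrestmem (by rw [hr]; simpa using hb)
      rw [← hr]
      show a :: l = List.replicate tw.length a ++ rlBuild y a (runLengths rest)
      rw [← hrec, ← htwrep, hsplit]

def rlB (t : ℕ → ℕ) (k : ℕ) : ℕ := ∑ j ∈ Finset.range k, t j

def rlIdx (t : ℕ → ℕ) (i : ℕ) : ℕ := Nat.findGreatest (fun k => rlB t k ≤ i) i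

def rlInf (x y : ℕ) (t : ℕ → ℕ) (i : ℕ) : ℕ := if rlIdx t i % 2 = 0 then x else y

lemma rlB_succ (t : ℕ → ℕ) (k : ℕ) : rlB t (k + 1) = rlB t k + t k :=
  Finset.sum_range_succ t k

lemma rlB_strictMono {t : ℕ → ℕ} (ht : ∀ i, 0 < t i) : StrictMono (rlB t) := by
  apply strictMono_nat_of_lt_succ
  intro k
  rw [rlB_succ]
  have := ht k
  omega

lemma le_rlB {t : ℕ → ℕ} (ht : ∀ i, 0 < t i) (k : ℕ) : k ≤ rlB t k := by
  induction k with
  | zero => simp [rlB]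
  | succ k ih => rw [rlB_succ]; have := ht k; omega

lemma rlIdx_spec {t : ℕ → ℕ} (ht : ∀ i, 0 < t i) (i : ℕ) :
    rlB t (rlIdx t i) ≤ i ∧ i < rlB t (rlIdx t i + 1) := by
  have h1 : rlB t (rlIdx t i) ≤ i :=
    Nat.findGreatest_spec (P := fun k => rlB t k ≤ i) (Nat.zero_le i) (by simp [rlB])
  refine ⟨h1, ?_⟩
  by_contra h
  push_neg at h
  have h2 : rlIdx t i + 1 ≤ i := le_trans (le_rlB ht _) h
  have h3 : rlIdx t i + 1 ≤ rlIdx t i := Nat.le_findGreatest h2 h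
  omega

lemma rlIdx_eq {t : ℕ → ℕ} (ht : ∀ i, 0 < t i) {k i : ℕ}
    (h1 : rlB t k ≤ i) (h2 : i < rlB t (k + 1)) : rlIdx t i = k := by
  obtain ⟨g1, g2⟩ := rlIdx_spec ht i
  rcases lt_trichotomy (rlIdx t i) k with h | h | h
  · have := (rlB_strictMono ht).le_iff_le.mpr (show rlIdx t i + 1 ≤ k from h)
    omega
  · exact h
  · have := (rlB_strictMono ht).le_iff_le.mpr (show k + 1 ≤ rlIdx t i from h)
    omega

lemma rlIdx_rlB {t : ℕ → ℕ} (ht : ∀ i, 0 < t i) (k : ℕ) : rlIdx t (rlB t k) = k :=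
  rlIdx_eq ht le_rfl (rlB_strictMono ht (Nat.lt_succ_self k))

lemma rlInf_infRunLengthsIs (x y : ℕ) (hxy : x ≠ y) {t : ℕ → ℕ} (ht : ∀ i, 0 < t i) :
    InfRunLengthsIs (rlInf x y t) t := by
  refine ⟨rlB t, by simp [rlB], rlB_strictMono ht, ?_, ?_, ?_⟩
  · intro k i h1 h2
    unfold rlInf
    rw [rlIdx_eq ht h1 h2, rlIdx_rlB ht]
  · intro k
    unfold rlInf
    rw [rlIdx_rlB ht, rlIdx_rlB ht]
    by_cases hk : k % 2 = 0
    · rw [if_pos hk, if_neg (by omega)]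
      exact Ne.symm hxy
    · rw [if_neg hk, if_pos (by omega)]
      exact hxy
  · intro k
    rw [rlB_succ]
    omega

lemma rlInf_zero (x y : ℕ) {t : ℕ → ℕ} (ht : ∀ i, 0 < t i) : rlInf x y t 0 = x := by
  unfold rlInf
  rw [rlIdx_eq (k := 0) ht (by simp [rlB]) (by rw [rlB_succ]; have := ht 0; simp [rlB]; omega)]
  simp

lemma inf_unique (x y : ℕ) (hxy : x ≠ y) {t : ℕ → ℕ} (ht : ∀ i, 0 < t i)
    (s : ℕ → ℕ) (hmem : ∀ i, s i = x ∨ s i = y) (hinf : InfRunLengthsIs s t)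
    (h0 : s 0 = x) : s = rlInf x y t := by
  obtain ⟨b, hb0, hbmono, hconst, hne, hr⟩ := hinf
  have hbB : ∀ k, b k = rlB t k := by
    intro k
    induction k with
    | zero => simp [hb0, rlB]
    | succ k ih =>
      have h1 := hr k
      have h2 := hbmono (lt_add_one k)
      rw [rlB_succ, ← ih]
      omega
  have halt : ∀ k, s (rlB t k) = (if k % 2 = 0 then x else y) := by
    intro k
    induction k with
    | zero => simpa [rlB] using h0
    | succ k ih =>
      have h1 := hne k
      rw [hbB, hbB, ih] at h1
      by_cases hk : k % 2 = 0
      · rw [if_neg (by omega)]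
        rw [if_pos hk] at h1
        rcases hmem (rlB t (k + 1)) with h | h
        · exact absurd h h1
        · exact h
      · rw [if_pos (by omega)]
        rw [if_neg hk] at h1
        rcases hmem (rlB t (k + 1)) with h | h
        · exact h
        · exact absurd h h1
  funext i
  have g1 := (rlIdx_spec ht i).1
  have g2 := (rlIdx_spec ht i).2
  have := hconst (rlIdx t i) i (by rw [hbB]; exact g1) (by rw [hbB]; exact g2)
  rw [this, hbB, halt]
  rfl

/-- Let `m ≠ n` be positive integers and `t` a nonempty (finite or infinite) sequence of
positive integers.  There are exactly two sequences `s` with values in `{m, n}` such that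
`R(s) = t`: one with first term `m` and one with first term `n`, and they are complements
of each other (same length, corresponding terms summing to `m + n`). -/
theorem two_preimages_of_runLengths (m n : ℕ) (hm : 0 < m) (hn : 0 < n) (hmn : m ≠ n) :
    -- finite case
    (∀ t : List ℕ, t ≠ [] → (∀ a ∈ t, 0 < a) →
      ∃ s₁ s₂ : List ℕ,
        (∀ a ∈ s₁, a = m ∨ a = n) ∧ runLengths s₁ = t ∧ s₁.headD 0 = m ∧
        (∀ a ∈ s₂, a = m ∨ a = n) ∧ runLengths s₂ = t ∧ s₂.headD 0 = n ∧
        s₁.length = s₂.length ∧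
        (∀ i < s₁.length, s₁.getD i 0 + s₂.getD i 0 = m + n) ∧
        (∀ s : List ℕ, (∀ a ∈ s, a = m ∨ a = n) → runLengths s = t → s = s₁ ∨ s = s₂)) ∧
    -- infinite case
    (∀ t : ℕ → ℕ, (∀ i, 0 < t i) →
      ∃ s₁ s₂ : ℕ → ℕ,
        (∀ i, s₁ i = m ∨ s₁ i = n) ∧ InfRunLengthsIs s₁ t ∧ s₁ 0 = m ∧
        (∀ i, s₂ i = m ∨ s₂ i = n) ∧ InfRunLengthsIs s₂ t ∧ s₂ 0 = n ∧
        (∀ i, s₁ i + s₂ i = m + n) ∧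
        (∀ s : ℕ → ℕ, (∀ i, s i = m ∨ s i = n) → InfRunLengthsIs s t → s = s₁ ∨ s = s₂)) := by
  constructor
  · intro t ht0 htpos
    obtain ⟨c, t', rfl⟩ := List.exists_cons_of_ne_nil ht0
    have hc : 0 < c := htpos c (by simp)
    refine ⟨rlBuild m n (c :: t'), rlBuild n m (c :: t'),
      fun a ha => mem_rlBuild _ m n a ha,
      runLengths_rlBuild _ m n hmn htpos, ?_,
      fun a ha => (mem_rlBuild _ n m a ha).symm,
      runLengths_rlBuild _ n m (Ne.symm hmn) htpos, ?_,
      by rw [rlBuild_length, rlBuild_length],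
      fun i hi => rlBuild_sum _ m n i hi, ?_⟩
    · rw [List.headD_eq_head?, rlBuild_head? m n c hc t']
      rfl
    · rw [List.headD_eq_head?, rlBuild_head? n m c hc t']
      rfl
    · intro s hsmem hsrl
      have hsne : s ≠ [] := by
        intro h
        rw [h] at hsrl
        exact (List.cons_ne_nil c t') hsrl.symm
      obtain ⟨a, l, rfl⟩ := List.exists_cons_of_ne_nil hsne
      rcases hsmem a (by simp) with h | h
      · left
        rw [← hsrl]
        exact eq_rlBuild_aux (a :: l).length m n hmn _ le_rfl hsne hsmem h
      · right
        rw [← hsrl]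
        exact eq_rlBuild_aux (a :: l).length n m (Ne.symm hmn) _ le_rfl hsne
          (fun z hz => (hsmem z hz).symm) h
  · intro t ht
    refine ⟨rlInf m n t, rlInf n m t, ?_,
      rlInf_infRunLengthsIs m n hmn ht, rlInf_zero m n ht, ?_,
      rlInf_infRunLengthsIs n m (Ne.symm hmn) ht, rlInf_zero n m ht, ?_, ?_⟩
    · intro i
      by_cases h : rlIdx t i % 2 = 0 <;> simp [rlInf, h]
    · intro i
      by_cases h : rlIdx t i % 2 = 0 <;> simp [rlInf, h]
    · intro i
      by_cases h : rlIdx t i % 2 = 0 <;> simp [rlInf, h] <;> omega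
    · intro s hsmem hinf
      rcases hsmem 0 with h | h
      · exact Or.inl (inf_unique m n hmn ht s hsmem hinf h)
      · exact Or.inr (inf_unique n m (Ne.symm hmn) ht s
          (fun i => (hsmem i).symm) hinf h)
end

section
/- Let m and n be distinct positive integers, let t be a nonempty finite sequence with values in {m, n}, let s^(1) be a nonempty finite sequence of positive integers, and let s^(2) be a nonempty (finite or infinite) sequence of positive integers. Then E_{m,n}(s^(1) s^(2), t) = E_{m,n}(s^(1), t) E_{m,n}(s^(2), C_{m,n}(s^(1), t)), where juxtaposition denotes concatenation. -/
/-- `expand1 m n x s` : the expansion `E_{m,n}(s, x)` of the finite sequence `s` with the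
single starting point `x ∈ {m, n}`: the unique sequence with values in `{m, n}`, first term
`x`, and run-lengths `s`. -/
def expand1 (m n : ℕ) : ℕ → List ℕ → List ℕ
  | _, [] => []
  | x, a :: l => List.replicate a x ++ expand1 m n (m + n - x) l

/-- `expand m n s t` : the expansion `E_{m,n}(s, t)` of the finite sequence `s` with the
finite sequence of starting points `t` (values in `{m, n}`), defined by
`E_{m,n}(s, t₁ t') = E_{m,n}(E_{m,n}(s, t₁), t')`. -/
def expand (m n : ℕ) : List ℕ → List ℕ → List ℕ
  | s, [] => s
  | s, x :: t => expand m n (expand1 m n x s) t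

/-- `torsion m n s t` : the torsion `C_{m,n}(s, t)`, the sequence of the same length as `t`
whose `k`-th term equals `m + n` minus the last term of `E_{m,n}(s, t⁽ᵏ⁾)`, where `t⁽ᵏ⁾`
consists of the first `k` terms of `t`. -/
def torsion (m n : ℕ) (s t : List ℕ) : List ℕ :=
  (List.range t.length).map fun k => m + n - (expand m n s (t.take (k + 1))).getLastD 0

/-- `IsExpansionInf m n s t u` : the infinite sequence `u` is the expansion `E_{m,n}(s, t)`
of the infinite sequence `s` with starting points `t`, i.e. `R^{|t|}(u) = s`, and for
`k = 0, …, |t| - 1`, `R^k(u)` has values in `{m, n}` and first term `t_{|t|-k}`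
(1-indexed). -/
def IsExpansionInf (m n : ℕ) (s : ℕ → ℕ) (t : List ℕ) (u : ℕ → ℕ) : Prop :=
  ∃ v : ℕ → ℕ → ℕ, v 0 = u ∧ v t.length = s ∧
    (∀ k < t.length, InfRunLengthsIs (v k) (v (k + 1))) ∧
    (∀ k < t.length, (∀ i, v k i = m ∨ v k i = n) ∧ v k 0 = t.getD (t.length - 1 - k) 0)

/-- `appendInf l s` : the concatenation of the finite sequence `l` followed by the
infinite sequence `s`. -/
def appendInf (l : List ℕ) (s : ℕ → ℕ) : ℕ → ℕ := fun i =>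
  if h : i < l.length then l.get ⟨i, h⟩ else s (i - l.length)

lemma getLastD_indep (c : ℕ) (l : List ℕ) (d d' : ℕ) :
    (c :: l).getLastD d = (c :: l).getLastD d' := by
  rw [List.getLastD_cons, List.getLastD_cons]

lemma getLastD_append (l₁ l₂ : List ℕ) (h : l₂ ≠ []) (d : ℕ) :
    (l₁ ++ l₂).getLastD d = l₂.getLastD d := by
  induction l₁ generalizing d with
  | nil => rfl
  | cons a l₁ ih =>
    rw [List.cons_append, List.getLastD_cons, ih a]
    obtain ⟨c, l, rfl⟩ := List.exists_cons_of_ne_nil h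
    exact getLastD_indep c l a d

lemma getLastD_replicate (x d : ℕ) : ∀ a, 0 < a → (List.replicate a x).getLastD d = x := by
  intro a ha
  induction a generalizing d with
  | zero => omega
  | succ a ih =>
    rw [List.replicate_succ, List.getLastD_cons]
    rcases Nat.eq_zero_or_pos a with h | h
    · subst h; rfl
    · exact ih x h

lemma expand1_ne_nil (m n x : ℕ) (s : List ℕ) (hs : s ≠ []) (hp : ∀ a ∈ s, 0 < a) :
    expand1 m n x s ≠ [] := by
  obtain ⟨a, l, rfl⟩ := List.exists_cons_of_ne_nil hs
  have ha : 0 < a := hp a (by simp)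
  simp [expand1]
  omega

lemma expand1_mem (m n : ℕ) : ∀ (s : List ℕ) (x : ℕ), (x = m ∨ x = n) →
    ∀ a ∈ expand1 m n x s, a = m ∨ a = n := by
  intro s
  induction s with
  | nil => intro x hx a ha; simp [expand1] at ha
  | cons b l ih =>
    intro x hx a ha
    simp only [expand1, List.mem_append, List.mem_replicate] at ha
    rcases ha with ⟨-, rfl⟩ | ha
    · exact hx
    · refine ih (m + n - x) ?_ a ha
      rcases hx with rfl | rfl
      · right; omega
      · left; omega

lemma expand1_append_key (m n : ℕ) : ∀ (s : List ℕ), s ≠ [] → (∀ a ∈ s, 0 < a) →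
    ∀ (x : ℕ) (s' : List ℕ),
    expand1 m n x (s ++ s') =
      expand1 m n x s ++ expand1 m n (m + n - (expand1 m n x s).getLastD 0) s' := by
  intro s
  induction s with
  | nil => intro h; exact absurd rfl h
  | cons a l ih =>
    intro _ hp x s'
    have ha : 0 < a := hp a (by simp)
    rcases eq_or_ne l [] with rfl | hl
    · simp only [expand1, List.nil_append, List.cons_append, List.append_nil,
        List.append_assoc]
      rw [getLastD_replicate x 0 a ha]
    · have hlp : ∀ b ∈ l, 0 < b := fun b hb => hp b (by simp [hb])
      simp only [expand1, List.cons_append, List.append_assoc, List.append_eq]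
      rw [ih hl hlp (m + n - x) s',
        getLastD_append _ _ (expand1_ne_nil m n (m + n - x) l hl hlp) 0]

lemma torsion_cons (m n : ℕ) (s : List ℕ) (x : ℕ) (t : List ℕ) :
    torsion m n s (x :: t) =
      (m + n - (expand1 m n x s).getLastD 0) :: torsion m n (expand1 m n x s) t := by
  simp only [torsion, List.length_cons, List.range_succ_eq_map, List.map_cons, List.map_map]
  constructor

lemma getLastD_mem : ∀ (l : List ℕ), l ≠ [] → ∀ d, l.getLastD d ∈ l := by
  intro l
  induction l with
  | nil => intro h; exact absurd rfl h
  | cons a l ih =>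
    intro _ d
    rcases eq_or_ne l [] with rfl | hl
    · simp [List.getLastD_cons]
    · rw [List.getLastD_cons]
      exact List.mem_cons_of_mem a (ih hl a)

lemma expand1_pos (m n : ℕ) (hm : 0 < m) (hn : 0 < n) (s : List ℕ) (x : ℕ)
    (hx : x = m ∨ x = n) : ∀ a ∈ expand1 m n x s, 0 < a := fun a ha => by
  rcases expand1_mem m n s x hx a ha with rfl | rfl <;> assumption

lemma expand_append_fin (m n : ℕ) (hm : 0 < m) (hn : 0 < n) :
    ∀ (t : List ℕ), (∀ a ∈ t, a = m ∨ a = n) →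
    ∀ (s₁ : List ℕ), s₁ ≠ [] → (∀ a ∈ s₁, 0 < a) →
    ∀ (s₂ : List ℕ), s₂ ≠ [] → (∀ a ∈ s₂, 0 < a) →
    expand m n (s₁ ++ s₂) t = expand m n s₁ t ++ expand m n s₂ (torsion m n s₁ t) := by
  intro t
  induction t with
  | nil => intros; rfl
  | cons x t ih =>
    intro htv s₁ h1 h1p s₂ h2 h2p
    have hx : x = m ∨ x = n := htv x (by simp)
    set e₁ := expand1 m n x s₁ with he₁
    have he₁n : e₁ ≠ [] := expand1_ne_nil m n x s₁ h1 h1p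
    have he₁m : ∀ a ∈ e₁, a = m ∨ a = n := expand1_mem m n s₁ x hx
    have he₁p : ∀ a ∈ e₁, 0 < a := expand1_pos m n hm hn s₁ x hx
    have hlm : e₁.getLastD 0 ∈ e₁ := getLastD_mem e₁ he₁n 0
    have hx'v : m + n - e₁.getLastD 0 = m ∨ m + n - e₁.getLastD 0 = n := by
      rcases he₁m _ hlm with h | h <;> rw [h]
      · right; omega
      · left; omega
    have he₂n : expand1 m n (m + n - e₁.getLastD 0) s₂ ≠ [] :=
      expand1_ne_nil m n _ s₂ h2 h2p
    have he₂p := expand1_pos m n hm hn s₂ _ hx'v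
    have key : expand1 m n x (s₁ ++ s₂) = e₁ ++ expand1 m n (m + n - e₁.getLastD 0) s₂ :=
      expand1_append_key m n s₁ h1 h1p x s₂
    show expand m n (expand1 m n x (s₁ ++ s₂)) t = _
    rw [key, ih (fun a ha => htv a (List.mem_cons_of_mem x ha)) e₁ he₁n he₁p _ he₂n he₂p,
      torsion_cons]
    rfl



lemma appendInf_nil (s : ℕ → ℕ) : appendInf [] s = s := by
  funext i; simp [appendInf]

lemma appendInf_cons_zero (a : ℕ) (l : List ℕ) (s : ℕ → ℕ) : appendInf (a :: l) s 0 = a := by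
  simp [appendInf]

lemma appendInf_cons_succ (a : ℕ) (l : List ℕ) (s : ℕ → ℕ) (k : ℕ) :
    appendInf (a :: l) s (k + 1) = appendInf l s k := by
  by_cases h : k < l.length <;>
    simp [appendInf, h, Nat.succ_lt_succ_iff, Nat.succ_sub_succ]

lemma appendInf_add (l : List ℕ) (s : ℕ → ℕ) (i : ℕ) :
    appendInf l s (l.length + i) = s i := by
  unfold appendInf
  rw [dif_neg (by omega)]
  congr 1
  omega

lemma eq_appendInf (l : List ℕ) (s u : ℕ → ℕ)
    (h1 : ∀ (i : ℕ) (h : i < l.length), u i = l.get ⟨i, h⟩)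
    (h2 : ∀ i, u (l.length + i) = s i) : u = appendInf l s := by
  funext i
  unfold appendInf
  split
  · exact h1 i _
  · next h =>
    have := h2 (i - l.length)
    rwa [show l.length + (i - l.length) = i by omega] at this

lemma appendInf_append (l₁ l₂ : List ℕ) (s : ℕ → ℕ) :
    appendInf (l₁ ++ l₂) s = appendInf l₁ (appendInf l₂ s) := by
  induction l₁ with
  | nil => rw [List.nil_append, appendInf_nil]
  | cons a l₁ ih =>
    funext i
    cases i with
    | zero => rw [List.cons_append, appendInf_cons_zero, appendInf_cons_zero]
    | succ k =>
      rw [List.cons_append, appendInf_cons_succ, appendInf_cons_succ, ih]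

/-- shift a run-length structure past its first block -/
lemma shift_runs (u r : ℕ → ℕ) (a : ℕ)
    (h : InfRunLengthsIs u (fun k => if k = 0 then a else r (k - 1))) :
    (∀ i < a, u i = u 0) ∧ u a ≠ u 0 ∧
      InfRunLengthsIs (fun i => u (a + i)) r := by
  obtain ⟨b, hb0, hmono, hconst, hne, hlen⟩ := h
  have hb1 : b 1 = a := by have := hlen 0; simp [hb0] at this; omega
  have hble : ∀ k, a ≤ b (k + 1) := by
    intro k
    calc a = b 1 := hb1.symm
    _ ≤ b (k + 1) := hmono.monotone (by omega)
  have hb1' : b (0 + 1) = a := hb1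
  refine ⟨?_, ?_, ?_⟩
  · intro i hi
    have := hconst 0 i (by omega) (by omega)
    rwa [hb0] at this
  · have := hne 0
    rwa [hb0, hb1'] at this
  · refine ⟨fun k => b (k + 1) - a, by show b (0 + 1) - a = 0; omega, ?_, ?_, ?_, ?_⟩
    · intro k k' hk
      show b (k + 1) - a < b (k' + 1) - a
      have := hmono (show k + 1 < k' + 1 by omega)
      have := hble k
      omega
    · intro k i hki hki'
      have hki : b (k + 1) - a ≤ i := hki
      have hki' : i < b (k + 1 + 1) - a := hki'
      have h1 : b (k + 1) ≤ a + i := by have := hble k; omega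
      have h2 : a + i < b (k + 1 + 1) := by have := hble (k + 1); omega
      have := hconst (k + 1) (a + i) h1 h2
      show u (a + i) = u (a + (b (k + 1) - a))
      rw [this]
      congr 1
      have := hble k
      omega
    · intro k
      have := hne (k + 1)
      show u (a + (b (k + 1 + 1) - a)) ≠ u (a + (b (k + 1) - a))
      have e1 : a + (b (k + 1 + 1) - a) = b (k + 1 + 1) := by have := hble (k + 1); omega
      have e2 : a + (b (k + 1) - a) = b (k + 1) := by have := hble k; omega
      rw [e1, e2]
      exact this
    · intro k
      have h3 : (if k + 1 = 0 then a else r (k + 1 - 1)) = b (k + 1 + 1) - b (k + 1) :=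
        hlen (k + 1)
      rw [if_neg (Nat.succ_ne_zero k), Nat.add_sub_cancel] at h3
      have h1 := hble k
      have h2 := hble (k + 1)
      show r k = b (k + 1 + 1) - a - (b (k + 1) - a)
      omega


lemma appendInf_cons_eq (a : ℕ) (l : List ℕ) (s : ℕ → ℕ) :
    appendInf (a :: l) s = fun k => if k = 0 then a else appendInf l s (k - 1) := by
  funext k
  cases k with
  | zero => rw [appendInf_cons_zero, if_pos rfl]
  | succ k => rw [appendInf_cons_succ, if_neg (Nat.succ_ne_zero k), Nat.add_sub_cancel]
-- step lemma, to be appended after aux1+aux2 content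
lemma step_lemma (m n : ℕ) :
    ∀ (s₁ : List ℕ), s₁ ≠ [] → (∀ a ∈ s₁, 0 < a) →
    ∀ (s₂ : ℕ → ℕ) (u : ℕ → ℕ), (∀ i, u i = m ∨ u i = n) →
    InfRunLengthsIs u (appendInf s₁ s₂) →
    ∃ w : ℕ → ℕ, u = appendInf (expand1 m n (u 0) s₁) w ∧
      InfRunLengthsIs w s₂ ∧ (∀ i, w i = m ∨ w i = n) ∧
      w 0 = m + n - (expand1 m n (u 0) s₁).getLastD 0 := by
  intro s₁
  induction s₁ with
  | nil => intro h; exact absurd rfl h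
  | cons a l ih =>
    intro _ hp s₂ u hu hR
    have ha : 0 < a := hp a (by simp)
    rw [appendInf_cons_eq] at hR
    obtain ⟨hblock, hne, hshift⟩ := shift_runs u (appendInf l s₂) a hR
    have hfirst : u a = m + n - u 0 := by
      rcases hu a with h1 | h1 <;> rcases hu 0 with h2 | h2 <;>
        rw [h1, h2] at hne ⊢ <;> omega
    rcases eq_or_ne l [] with rfl | hl
    · have hrep : expand1 m n (u 0) [a] = List.replicate a (u 0) := by
        simp [expand1]
      rw [appendInf_nil] at hshift
      refine ⟨fun i => u (a + i), ?_, hshift, fun i => hu (a + i), ?_⟩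
      · rw [hrep]
        refine eq_appendInf _ _ _ ?_ ?_
        · intro i h
          rw [hblock i (by simpa using h)]
          simp
        · intro i
          simp [List.length_replicate]
      · rw [hrep, getLastD_replicate _ _ a ha]
        exact hfirst
    · have hlp : ∀ b ∈ l, 0 < b := fun b hb => hp b (by simp [hb])
      obtain ⟨w, hw1, hw2, hw3, hw4⟩ :=
        ih hl hlp s₂ (fun i => u (a + i)) (fun i => hu (a + i)) hshift
      have hu'0 : u (a + 0) = m + n - u 0 := hfirst
      rw [hu'0] at hw1 hw4
      have hdef : expand1 m n (u 0) (a :: l) =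
          List.replicate a (u 0) ++ expand1 m n (m + n - u 0) l := rfl
      refine ⟨w, ?_, hw2, hw3, ?_⟩
      · rw [hdef, appendInf_append]
        refine eq_appendInf _ _ _ ?_ ?_
        · intro i h
          rw [hblock i (by simpa using h)]
          simp
        · intro i
          show u ((List.replicate a (u 0)).length + i) =
            appendInf (expand1 m n (m + n - u 0) l) w i
          rw [List.length_replicate, ← hw1]
      · rw [hdef, getLastD_append _ _ (expand1_ne_nil m n (m + n - u 0) l hl hlp) 0]
        exact hw4


lemma isexp_cons_elim {m n : ℕ} {S : ℕ → ℕ} {x : ℕ} {t : List ℕ} {u : ℕ → ℕ}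
    (h : IsExpansionInf m n S (x :: t) u) :
    ∃ S' : ℕ → ℕ, InfRunLengthsIs S' S ∧ (∀ i, S' i = m ∨ S' i = n) ∧ S' 0 = x ∧
      IsExpansionInf m n S' t u := by
  obtain ⟨v, h0, hL, hstep, hval⟩ := h
  simp only [List.length_cons] at hL hstep hval
  have hlt : t.length < t.length + 1 := by omega
  refine ⟨v t.length, hL ▸ hstep t.length hlt, (hval t.length hlt).1, ?_, ?_⟩
  · have := (hval t.length hlt).2
    rwa [show t.length + 1 - 1 - t.length = 0 by omega, List.getD_cons_zero] at this
  · refine ⟨v, h0, rfl, fun k hk => hstep k (by omega), fun k hk => ?_⟩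
    refine ⟨(hval k (by omega)).1, ?_⟩
    have := (hval k (by omega)).2
    rwa [show t.length + 1 - 1 - k = (t.length - 1 - k) + 1 by omega,
      List.getD_cons_succ] at this

lemma isexp_cons_intro {m n : ℕ} {S S' : ℕ → ℕ} {x : ℕ} {t : List ℕ} {u : ℕ → ℕ}
    (h1 : InfRunLengthsIs S' S) (h2 : ∀ i, S' i = m ∨ S' i = n) (h3 : S' 0 = x)
    (h : IsExpansionInf m n S' t u) : IsExpansionInf m n S (x :: t) u := by
  obtain ⟨v, h0, hL, hstep, hval⟩ := h
  refine ⟨fun k => if k = t.length + 1 then S else v k, ?_, ?_, ?_, ?_⟩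
  · simp only [if_neg (show (0 : ℕ) ≠ t.length + 1 by omega)]
    exact h0
  · simp
  · intro k hk
    simp only [List.length_cons] at hk
    show InfRunLengthsIs (if k = t.length + 1 then S else v k)
      (if k + 1 = t.length + 1 then S else v (k + 1))
    rcases Nat.lt_or_ge k t.length with h | h
    · rw [if_neg (by omega), if_neg (by omega)]
      exact hstep k h
    · have hkeq : k = t.length := by omega
      subst hkeq
      rw [if_neg (by omega), if_pos rfl, hL]
      exact h1
  · intro k hk
    simp only [List.length_cons] at hk
    show (∀ i, (if k = t.length + 1 then S else v k) i = m ∨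
        (if k = t.length + 1 then S else v k) i = n) ∧
      (if k = t.length + 1 then S else v k) 0 = (x :: t).getD ((x :: t).length - 1 - k) 0
    rw [if_neg (by omega)]
    rcases Nat.lt_or_ge k t.length with h | h
    · refine ⟨(hval k h).1, ?_⟩
      rw [(hval k h).2, show (x :: t).length - 1 - k = (t.length - 1 - k) + 1 by
        simp only [List.length_cons]; omega, List.getD_cons_succ]
    · have hkeq : k = t.length := by omega
      subst hkeq
      rw [hL]
      refine ⟨h2, ?_⟩
      rw [show (x :: t).length - 1 - t.length = 0 by simp only [List.length_cons]; omega,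
        List.getD_cons_zero]
      exact h3

lemma expand_append_inf (m n : ℕ) (hm : 0 < m) (hn : 0 < n) :
    ∀ (t : List ℕ), (∀ a ∈ t, a = m ∨ a = n) →
    ∀ (s₁ : List ℕ), s₁ ≠ [] → (∀ a ∈ s₁, 0 < a) →
    ∀ (s₂ : ℕ → ℕ) (u : ℕ → ℕ), IsExpansionInf m n (appendInf s₁ s₂) t u →
    ∃ w, IsExpansionInf m n s₂ (torsion m n s₁ t) w ∧
      u = appendInf (expand m n s₁ t) w := by
  intro t
  induction t with
  | nil =>
    intro _ s₁ _ _ s₂ u hu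
    obtain ⟨v, h0, hL, -, -⟩ := hu
    refine ⟨s₂, ⟨fun _ => s₂, rfl, rfl, ?_, ?_⟩, ?_⟩
    · intro k hk; simp [torsion] at hk
    · intro k hk; simp [torsion] at hk
    · rw [← h0]; exact hL
  | cons x t ih =>
    intro htv s₁ h1 h1p s₂ u hu
    have hx : x = m ∨ x = n := htv x (by simp)
    obtain ⟨S', hRS, hSv, hS0, hexp⟩ := isexp_cons_elim hu
    obtain ⟨w₂, hS'eq, hw₂R, hw₂v, hw₂0⟩ := step_lemma m n s₁ h1 h1p s₂ S' hSv hRS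
    rw [hS0] at hS'eq hw₂0
    have he₁n : expand1 m n x s₁ ≠ [] := expand1_ne_nil m n x s₁ h1 h1p
    have he₁p : ∀ a ∈ expand1 m n x s₁, 0 < a := expand1_pos m n hm hn s₁ x hx
    rw [hS'eq] at hexp
    obtain ⟨w, hwExp, hueq⟩ := ih (fun a ha => htv a (List.mem_cons_of_mem x ha))
      (expand1 m n x s₁) he₁n he₁p w₂ u hexp
    refine ⟨w, ?_, ?_⟩
    · rw [torsion_cons]
      exact isexp_cons_intro hw₂R hw₂v hw₂0 hwExp
    · rw [hueq]
      rfl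

/-- Let `m ≠ n` be positive, `t` a nonempty finite sequence with values in `{m, n}`,
`s₁` a nonempty finite sequence of positive integers, and `s₂` a nonempty (finite or
infinite) sequence of positive integers.  Then
`E_{m,n}(s₁ s₂, t) = E_{m,n}(s₁, t) E_{m,n}(s₂, C_{m,n}(s₁, t))`. -/
theorem expand_append_left (m n : ℕ) (hm : 0 < m) (hn : 0 < n) (hmn : m ≠ n)
    (t : List ℕ) (ht : t ≠ []) (htv : ∀ a ∈ t, a = m ∨ a = n)
    (s₁ : List ℕ) (hs₁ : s₁ ≠ []) (hs₁p : ∀ a ∈ s₁, 0 < a) :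
    -- `s₂` finite
    (∀ s₂ : List ℕ, s₂ ≠ [] → (∀ a ∈ s₂, 0 < a) →
      expand m n (s₁ ++ s₂) t = expand m n s₁ t ++ expand m n s₂ (torsion m n s₁ t)) ∧
    -- `s₂` infinite
    (∀ s₂ : ℕ → ℕ, (∀ i, 0 < s₂ i) →
      ∀ u : ℕ → ℕ, IsExpansionInf m n (appendInf s₁ s₂) t u →
        ∃ w : ℕ → ℕ, IsExpansionInf m n s₂ (torsion m n s₁ t) w ∧
          u = appendInf (expand m n s₁ t) w) := by
  constructor
  · intro s₂ h2 h2p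
    exact expand_append_fin m n hm hn t htv s₁ hs₁ hs₁p s₂ h2 h2p
  · intro s₂ _ u hu
    exact expand_append_inf m n hm hn t htv s₁ hs₁ hs₁p s₂ u hu
end

section
/- Let m and n be distinct positive integers, let s be a nonempty finite sequence of positive integers, and let t^(1), t^(2) be nonempty finite sequences with values in {m, n}. Then C_{m,n}(s, t^(1) t^(2)) = C_{m,n}(s, t^(1)) C_{m,n}(E_{m,n}(s, t^(1)), t^(2)), where juxtaposition denotes concatenation. -/
theorem expand_cat (m n : ℕ) (s t₁ t₂ : List ℕ) :
    expand m n s (t₁ ++ t₂) = expand m n (expand m n s t₁) t₂ := by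
  induction t₁ generalizing s with
  | nil => rfl
  | cons x t ih => simp [expand, ih]

/-- `C_{m,n}(s, t⁽¹⁾ t⁽²⁾) = C_{m,n}(s, t⁽¹⁾) C_{m,n}(E_{m,n}(s, t⁽¹⁾), t⁽²⁾)`. -/
theorem torsion_append_right (m n : ℕ) (hm : 0 < m) (hn : 0 < n) (hmn : m ≠ n)
    (s : List ℕ) (hs : s ≠ []) (hsp : ∀ a ∈ s, 0 < a)
    (t₁ t₂ : List ℕ) (ht₁ : t₁ ≠ []) (ht₂ : t₂ ≠ [])
    (ht₁v : ∀ a ∈ t₁, a = m ∨ a = n) (ht₂v : ∀ a ∈ t₂, a = m ∨ a = n) :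
    torsion m n s (t₁ ++ t₂) = torsion m n s t₁ ++ torsion m n (expand m n s t₁) t₂ := by
  unfold torsion
  rw [List.length_append, List.range_add, List.map_append, List.map_map]
  congr 1
  · apply List.map_congr_left
    intro k hk
    rw [List.mem_range] at hk
    rw [List.take_append_of_le_length hk]
  · apply List.map_congr_left
    intro k hk
    simp only [Function.comp_apply]
    rw [show t₁.length + k + 1 = t₁.length + (k + 1) by omega, List.take_length_add_append,
      expand_cat]
end

section
/- Let m and n be distinct positive integers, let s be a nonempty finite sequence of positive integers, and let k > 0. Then the length of every orbit of the bijection t ↦ C_{m,n}(s, t) on the set {m, n}^k is a power of 2. -/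
namespace TorsionAux

variable {m n : ℕ}

lemma expand1_ne_nil (x : ℕ) {s : List ℕ} (hs : s ≠ []) (hsp : ∀ a ∈ s, 0 < a) :
    expand1 m n x s ≠ [] := by
  cases s with
  | nil => exact absurd rfl hs
  | cons a l =>
    have ha : 0 < a := hsp a (by simp)
    have : 0 < (expand1 m n x (a :: l)).length := by
      simp only [expand1, List.length_append, List.length_replicate]
      omega
    exact List.ne_nil_of_length_pos this

lemma expand1_mem {x : ℕ} (hx : x = m ∨ x = n) (s : List ℕ) :
    ∀ a ∈ expand1 m n x s, a = m ∨ a = n := by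
  induction s generalizing x with
  | nil => simp [expand1]
  | cons a l ih =>
    intro b hb
    simp only [expand1, List.mem_append, List.mem_replicate] at hb
    rcases hb with ⟨-, rfl⟩ | hb
    · exact hx
    · exact ih (x := m + n - x) (by rcases hx with rfl | rfl <;> omega) b hb

lemma expand1_getLastD {x : ℕ} (hx : x ≤ m + n) {s : List ℕ} (hs : s ≠ [])
    (hsp : ∀ a ∈ s, 0 < a) :
    (expand1 m n x s).getLastD 0 = if s.length % 2 = 1 then x else m + n - x := by
  induction s generalizing x with
  | nil => exact absurd rfl hs
  | cons a l ih =>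
    cases l with
    | nil =>
      have ha : 0 < a := hsp a (by simp)
      have : expand1 m n x [a] = List.replicate a x := by simp [expand1]
      rw [this]
      simp [List.getLast?_replicate, Nat.pos_iff_ne_zero.mp ha]
    | cons b l' =>
      have h1 : expand1 m n (m + n - x) (b :: l') ≠ [] :=
        expand1_ne_nil _ (by simp) (fun c hc => hsp c (List.mem_cons_of_mem a hc))
      have h2 : (expand1 m n (m + n - x) (b :: l')).getLastD 0 =
          if (b :: l').length % 2 = 1 then m + n - x else m + n - (m + n - x) :=
        ih (x := m + n - x) (by omega) (by simp)
          (fun c hc => hsp c (List.mem_cons_of_mem a hc))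
      have : expand1 m n x (a :: b :: l') =
          List.replicate a x ++ expand1 m n (m + n - x) (b :: l') := rfl
      rw [this]
      rw [List.getLastD_eq_getLast?, List.getLast?_append]
      rw [List.getLastD_eq_getLast?] at h2
      rcases List.exists_mem_of_ne_nil _ h1 with ⟨c, -⟩
      have h3 : (expand1 m n (m + n - x) (b :: l')).getLast? ≠ none := by
        simpa [List.getLast?_eq_none_iff] using h1
      cases hh : (expand1 m n (m + n - x) (b :: l')).getLast? with
      | none => exact absurd hh h3
      | some v =>
        rw [hh] at h2
        simp only [Option.or_some, Option.some_or, Option.getD_some] at h2 ⊢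
        rw [h2]
        simp only [List.length_cons]
        split_ifs <;> omega

lemma expand1_pos (hm : 0 < m) (hn : 0 < n) {x : ℕ} (hx : x = m ∨ x = n) (s : List ℕ) :
    ∀ a ∈ expand1 m n x s, 0 < a := by
  intro a ha
  rcases expand1_mem hx s a ha with rfl | rfl <;> assumption

lemma expand_cons (s : List ℕ) (x : ℕ) (t : List ℕ) :
    expand m n s (x :: t) = expand m n (expand1 m n x s) t := rfl

lemma expand_ne_nil (hm : 0 < m) (hn : 0 < n) {s : List ℕ} (hs : s ≠ [])
    (hsp : ∀ a ∈ s, 0 < a) {t : List ℕ} (ht : ∀ a ∈ t, a = m ∨ a = n) :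
    expand m n s t ≠ [] ∧ ∀ a ∈ expand m n s t, 0 < a := by
  induction t generalizing s with
  | nil => exact ⟨hs, hsp⟩
  | cons x t ih =>
    have hx := ht x (by simp)
    rw [expand_cons]
    exact ih (expand1_ne_nil x hs hsp) (expand1_pos hm hn hx s)
      (fun a ha => ht a (by simp [ha]))

lemma expand_mem (hm : 0 < m) (hn : 0 < n) {s : List ℕ} (hs : s ≠ [])
    (hsp : ∀ a ∈ s, 0 < a) {t : List ℕ} (htn : t ≠ []) (ht : ∀ a ∈ t, a = m ∨ a = n) :
    ∀ a ∈ expand m n s t, a = m ∨ a = n := by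
  induction t generalizing s with
  | nil => exact absurd rfl htn
  | cons x t ih =>
    have hx := ht x (by simp)
    rw [expand_cons]
    cases t with
    | nil => exact expand1_mem hx s
    | cons y t' =>
      exact ih (expand1_ne_nil x hs hsp) (expand1_pos hm hn hx s) (by simp)
        (fun a ha => ht a (List.mem_cons_of_mem x ha))

lemma expand_append (s t : List ℕ) (x : ℕ) :
    expand m n s (t ++ [x]) = expand1 m n x (expand m n s t) := by
  induction t generalizing s with
  | nil => rfl
  | cons y t ih => exact ih (expand1 m n y s)

lemma torsion_length (s t : List ℕ) : (torsion m n s t).length = t.length := by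
  simp [torsion]

lemma torsion_append (s t : List ℕ) (x : ℕ) :
    torsion m n s (t ++ [x]) =
      torsion m n s t ++ [m + n - (expand m n s (t ++ [x])).getLastD 0] := by
  unfold torsion
  rw [List.length_append, List.length_singleton, List.range_succ, List.map_append]
  congr 1
  · apply List.map_congr_left
    intro k hk
    simp only [List.mem_range] at hk
    rw [List.take_append, show k + 1 - t.length = 0 by omega,
      List.take_zero, List.append_nil]
  · rw [List.map_singleton, List.take_of_length_le (by simp)]

lemma torsion_mem (hm : 0 < m) (hn : 0 < n) {s : List ℕ} (hs : s ≠ [])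
    (hsp : ∀ a ∈ s, 0 < a) {t : List ℕ} (ht : ∀ a ∈ t, a = m ∨ a = n) :
    ∀ a ∈ torsion m n s t, a = m ∨ a = n := by
  intro a ha
  simp only [torsion, List.mem_map, List.mem_range] at ha
  obtain ⟨k, hk, rfl⟩ := ha
  have htk : t.take (k + 1) ≠ [] := by
    have : 0 < (t.take (k + 1)).length := by
      rw [List.length_take]; omega
    exact List.ne_nil_of_length_pos this
  have htkm : ∀ a ∈ t.take (k + 1), a = m ∨ a = n :=
    fun a ha => ht a (List.mem_of_mem_take ha)
  have h1 := expand_ne_nil hm hn hs hsp htkm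
  have h2 := expand_mem hm hn hs hsp htk htkm
  have hmem : (expand m n s (t.take (k + 1))).getLastD 0 ∈ expand m n s (t.take (k + 1)) := by
    rcases List.exists_cons_of_ne_nil h1.1 with ⟨c, l, hcl⟩
    rw [hcl, List.getLastD_cons]
    exact List.getLastD_mem_cons
  rcases h2 _ hmem with h | h <;> rw [h] <;> omega

lemma torsion_concat (hm : 0 < m) (hn : 0 < n) {s : List ℕ} (hs : s ≠ [])
    (hsp : ∀ a ∈ s, 0 < a) {u : List ℕ} (hu : ∀ a ∈ u, a = m ∨ a = n)
    {x : ℕ} (hx : x = m ∨ x = n) :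
    torsion m n s (u ++ [x]) = torsion m n s u ++
      [if (expand m n s u).length % 2 = 1 then m + n - x else x] := by
  have h1 := expand_ne_nil hm hn hs hsp hu
  have hxle : x ≤ m + n := by rcases hx with rfl | rfl <;> omega
  rw [torsion_append, expand_append]
  have h2 := expand1_getLastD (m := m) (n := n) (x := x) hxle h1.1 h1.2
  rw [h2]
  congr 2
  split_ifs <;> rcases hx with rfl | rfl <;> omega

lemma torsion_iter_mem (hm : 0 < m) (hn : 0 < n) {s : List ℕ} (hs : s ≠ [])
    (hsp : ∀ a ∈ s, 0 < a) (j : ℕ) {u : List ℕ} (hu : ∀ a ∈ u, a = m ∨ a = n) :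
    ∀ a ∈ (torsion m n s)^[j] u, a = m ∨ a = n := by
  induction j with
  | zero => exact hu
  | succ j ih =>
    rw [Function.iterate_succ_apply']
    exact torsion_mem hm hn hs hsp ih

lemma key (hm : 0 < m) (hn : 0 < n) {s : List ℕ} (hs : s ≠ [])
    (hsp : ∀ a ∈ s, 0 < a) {u : List ℕ} (hu : ∀ a ∈ u, a = m ∨ a = n) (j : ℕ) :
    ∃ b : Bool, ∀ x, (x = m ∨ x = n) →
      (torsion m n s)^[j] (u ++ [x]) =
        (torsion m n s)^[j] u ++ [if b then x else m + n - x] := by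
  induction j with
  | zero => exact ⟨true, fun x hx => by simp⟩
  | succ j ih =>
    obtain ⟨b, hb⟩ := ih
    have hju : ∀ a ∈ (torsion m n s)^[j] u, a = m ∨ a = n :=
      torsion_iter_mem hm hn hs hsp j hu
    refine ⟨if (expand m n s ((torsion m n s)^[j] u)).length % 2 = 1 then !b else b,
      fun x hx => ?_⟩
    have hz : (if b then x else m + n - x) = m ∨ (if b then x else m + n - x) = n := by
      cases b <;> simp <;> rcases hx with rfl | rfl <;> omega
    rw [Function.iterate_succ_apply', hb x hx, Function.iterate_succ_apply',
      torsion_concat hm hn hs hsp hju hz]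
    congr 2
    have hxle : x ≤ m + n := by rcases hx with rfl | rfl <;> omega
    cases b <;> split_ifs <;> simp_all <;> omega

lemma torsion_iterate_pow (hm : 0 < m) (hn : 0 < n) {s : List ℕ} (hs : s ≠ [])
    (hsp : ∀ a ∈ s, 0 < a) (u : List ℕ) :
    (∀ a ∈ u, a = m ∨ a = n) → (torsion m n s)^[2 ^ u.length] u = u := by
  induction u using List.reverseRecOn with
  | nil => intro _; simp [torsion]
  | append_singleton u x ih =>
    intro hu
    have hu' : ∀ a ∈ u, a = m ∨ a = n := fun a ha => hu a (by simp [ha])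
    have hx : x = m ∨ x = n := hu x (by simp)
    obtain ⟨b, hb⟩ := key hm hn hs hsp hu' (2 ^ u.length)
    have hN := ih hu'
    have h1 := hb x hx
    rw [hN] at h1
    have hz : (if b then x else m + n - x) = m ∨ (if b then x else m + n - x) = n := by
      cases b <;> simp <;> rcases hx with rfl | rfl <;> omega
    have h2 := hb _ hz
    rw [hN] at h2
    have hlen : (u ++ [x]).length = u.length + 1 := by simp
    rw [hlen, show (2:ℕ) ^ (u.length + 1) = 2 ^ u.length + 2 ^ u.length by ring,
      Function.iterate_add_apply, h1, h2]
    congr 2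
    cases b <;> simp <;> rcases hx with rfl | rfl <;> omega

end TorsionAux

/-- Every orbit of the bijection `t ↦ C_{m,n}(s, t)` on `{m, n}^k` has length a power
of `2` (the orbit length being the minimal period of the point under the map). -/
theorem torsion_orbit_length_pow_two (m n : ℕ) (hm : 0 < m) (hn : 0 < n) (hmn : m ≠ n)
    (s : List ℕ) (hs : s ≠ []) (hsp : ∀ a ∈ s, 0 < a) (k : ℕ) (hk : 0 < k)
    (t : List ℕ) (htl : t.length = k) (htv : ∀ a ∈ t, a = m ∨ a = n) :
    ∃ i : ℕ, Function.minimalPeriod (torsion m n s) t = 2 ^ i := by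
  have hfix : (torsion m n s)^[2 ^ k] t = t := by
    rw [← htl]
    exact TorsionAux.torsion_iterate_pow hm hn hs hsp t htv
  have hper : Function.IsPeriodicPt (torsion m n s) (2 ^ k) t := hfix
  have hdvd : Function.minimalPeriod (torsion m n s) t ∣ 2 ^ k :=
    hper.minimalPeriod_dvd
  obtain ⟨i, -, hi⟩ := (Nat.dvd_prime_pow Nat.prime_two).mp hdvd
  exact ⟨i, hi⟩
end

section
/- Let n be a positive even integer. Then the following two statements are equivalent: (i) for every j > 0, the orbit of the sequence 1^{2j-1} under the map t ↦ C_{1,n}(1, t) on {1, n}^{2j-1} has length 2^j; (ii) for every j > 0, the sequence E_{1,n}(1^{2^j}, 1^{2j}) has odd length. -/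
namespace OC
variable {n : ℕ}

lemma getLastD_append_right (l1 : List ℕ) {l2 : List ℕ} (h : l2 ≠ []) (d : ℕ) :
    (l1 ++ l2).getLastD d = l2.getLastD d := by
  rw [List.getLastD_eq_getLast?, List.getLastD_eq_getLast?, List.getLast?_append]
  cases hl : l2.getLast? with
  | none => exact absurd (List.getLast?_eq_none_iff.mp hl) h
  | some a => rfl

lemma getLastD_replicate {a : ℕ} (x : ℕ) (h : 0 < a) : (List.replicate a x).getLastD 0 = x := by
  obtain ⟨b, rfl⟩ := Nat.exists_eq_succ_of_ne_zero h.ne'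
  rw [List.replicate_succ']
  exact List.getLastD_concat

/-- values in {1,n} -/
def OneN (n : ℕ) (t : List ℕ) : Prop := ∀ x ∈ t, x = 1 ∨ x = n

def Goodl (n : ℕ) (s : List ℕ) : Prop := s ≠ [] ∧ OneN n s

lemma flip_flip {x : ℕ} (hx : x = 1 ∨ x = n) : 1 + n - (1 + n - x) = x := by
  rcases hx with h | h <;> subst h <;> omega

lemma flip_mem {x : ℕ} (hx : x = 1 ∨ x = n) : 1 + n - x = 1 ∨ 1 + n - x = n := by
  rcases hx with h | h <;> subst h <;> omega

lemma expand1_length (x : ℕ) (s : List ℕ) : (expand1 1 n x s).length = s.sum := by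
  induction s generalizing x with
  | nil => rfl
  | cons a l ih => simp [expand1, ih]

lemma expand1_mem {x : ℕ} (hx : x = 1 ∨ x = n) {s : List ℕ} (hs : OneN n s) :
    OneN n (expand1 1 n x s) := by
  induction s generalizing x with
  | nil => intro y hy; simp [expand1] at hy
  | cons a l ih =>
    intro y hy
    simp only [expand1, List.mem_append] at hy
    rcases hy with hy | hy
    · rcases List.eq_of_mem_replicate hy with rfl; exact hx
    · exact ih (flip_mem hx) (fun z hz => hs z (List.mem_cons_of_mem _ hz)) y hy

lemma expand1_ne_nil (hn : 0 < n) {x : ℕ} {s : List ℕ} (hs : Goodl n s) :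
    expand1 1 n x s ≠ [] := by
  obtain ⟨hne, hmem⟩ := hs
  cases s with
  | nil => exact absurd rfl hne
  | cons a l =>
    have ha : a = 1 ∨ a = n := hmem a (List.mem_cons_self)
    have : 0 < a := by rcases ha with rfl | rfl <;> omega
    simp [expand1]
    intro h
    omega

lemma expand1_good (hn : 0 < n) {x : ℕ} (hx : x = 1 ∨ x = n) {s : List ℕ} (hs : Goodl n s) :
    Goodl n (expand1 1 n x s) :=
  ⟨expand1_ne_nil hn hs, expand1_mem hx hs.2⟩

lemma goodl_getLastD {s : List ℕ} (hs : Goodl n s) : s.getLastD 0 = 1 ∨ s.getLastD 0 = n := by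
  obtain ⟨hne, hmem⟩ := hs
  have h : s.getLastD 0 = s.getLast hne := by
    cases s with
    | nil => exact absurd rfl hne
    | cons a l => simp [List.getLastD_eq_getLast?, List.getLast?_eq_getLast]
  rw [h]
  exact hmem _ (List.getLast_mem hne)

lemma expand1_getLastD (hn : 0 < n) {x : ℕ} (hx : x = 1 ∨ x = n) {s : List ℕ} (hs : Goodl n s) :
    (expand1 1 n x s).getLastD 0 = if Even s.length then 1 + n - x else x := by
  obtain ⟨hne, hmem⟩ := hs
  induction s generalizing x with
  | nil => exact absurd rfl hne
  | cons a l ih =>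
    have ha : a = 1 ∨ a = n := hmem a (List.mem_cons_self)
    have hapos : 0 < a := by rcases ha with rfl | rfl <;> omega
    cases l with
    | nil =>
      have h1 : expand1 1 n x [a] = List.replicate a x := by simp [expand1]
      rw [h1, getLastD_replicate x hapos]
      simp
    | cons b l2 =>
      have hgood : Goodl n (b :: l2) := ⟨by simp, fun z hz => hmem z (List.mem_cons_of_mem _ hz)⟩
      have hrec := ih (flip_mem hx) (by simp) hgood.2
      have hne2 : expand1 1 n (1 + n - x) (b :: l2) ≠ [] := expand1_ne_nil hn hgood
      have h1 : expand1 1 n x (a :: b :: l2) = List.replicate a x ++ expand1 1 n (1 + n - x) (b :: l2) := by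
        simp [expand1]
      rw [h1, getLastD_append_right _ hne2, hrec, flip_flip hx]
      by_cases h : Even l2.length <;>
        simp [h, List.length_cons, Nat.even_add_one, ite_not]
lemma expand_append_t (s : List ℕ) (t1 t2 : List ℕ) :
    expand 1 n s (t1 ++ t2) = expand 1 n (expand 1 n s t1) t2 := by
  induction t1 generalizing s with
  | nil => rfl
  | cons x t ih => simp [expand, ih]

lemma expand_concat (s p : List ℕ) (x : ℕ) :
    expand 1 n s (p ++ [x]) = expand1 1 n x (expand 1 n s p) := by
  rw [expand_append_t]; rfl

lemma torsion_length (m : ℕ) (s t : List ℕ) : (torsion m n s t).length = t.length := by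
  simp [torsion]

lemma torsion_nil (m : ℕ) (s : List ℕ) : torsion m n s [] = [] := by simp [torsion]

lemma torsion_getElem (s t : List ℕ) (k : ℕ) (hk : k < t.length) :
    (torsion 1 n s t)[k]'(by simp [torsion_length, hk]) =
      1 + n - (expand 1 n s (t.take (k + 1))).getLastD 0 := by
  simp [torsion]

lemma torsion_take (s t : List ℕ) (k : ℕ) :
    torsion 1 n s (t.take k) = (torsion 1 n s t).take k := by
  apply List.ext_getElem
  · simp [torsion_length]
  · intro i h1 h2
    have hi : i < t.length := by simp [torsion_length] at h1; omega
    have hik : i < k := by simp [torsion_length] at h1; omega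
    rw [List.getElem_take]
    rw [torsion_getElem s t i hi]
    rw [torsion_getElem s (t.take k) i (by simp [torsion_length] at h1 ⊢; omega)]
    rw [List.take_take, min_eq_left (by omega)]

lemma torsion_concat (s p : List ℕ) (x : ℕ) :
    torsion 1 n s (p ++ [x]) =
      torsion 1 n s p ++ [1 + n - (expand 1 n s (p ++ [x])).getLastD 0] := by
  simp only [torsion, List.length_append, List.length_cons, List.length_nil]
  rw [show p.length + (0+1) = p.length + 1 by simp, List.range_succ, List.map_append]
  congr 1
  · apply List.map_congr_left
    intro k hk
    rw [List.mem_range] at hk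
    rw [List.take_append_of_le_length (by omega)]
  · simp only [List.map_cons, List.map_nil]
    rw [List.take_of_length_le (by simp)]

lemma torsion_cons (s : List ℕ) (x : ℕ) (t : List ℕ) :
    torsion 1 n s (x :: t) =
      (1 + n - (expand1 1 n x s).getLastD 0) :: torsion 1 n (expand1 1 n x s) t := by
  simp only [torsion, List.length_cons, List.range_succ_eq_map, List.map_cons, List.map_map]
  congr 1

lemma expand_good (hn : 0 < n) {s : List ℕ} (hs : Goodl n s) {t : List ℕ} (ht : OneN n t) :
    Goodl n (expand 1 n s t) := by
  induction t generalizing s with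
  | nil => exact hs
  | cons x t ih =>
    exact ih (expand1_good hn (ht x (List.mem_cons_self)) hs)
      (fun z hz => ht z (List.mem_cons_of_mem _ hz))

lemma oneN_take {t : List ℕ} (ht : OneN n t) (k : ℕ) : OneN n (t.take k) :=
  fun z hz => ht z (List.mem_of_mem_take hz)

lemma torsion_oneN (hn : 0 < n) {s : List ℕ} (hs : Goodl n s) {t : List ℕ} (ht : OneN n t) :
    OneN n (torsion 1 n s t) := by
  intro y hy
  simp only [torsion, List.mem_map, List.mem_range] at hy
  obtain ⟨k, hk, rfl⟩ := hy
  have hgood : Goodl n (expand 1 n s (t.take (k+1))) := expand_good hn hs (oneN_take ht _)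
  rcases goodl_getLastD hgood with h | h <;> rw [h]
  · right; omega
  · left; omega

lemma expand1_append (hn : 0 < n) {x : ℕ} (hx : x = 1 ∨ x = n) (s s' : List ℕ) :
    expand1 1 n x (s ++ s') =
      expand1 1 n x s ++ expand1 1 n (if Even s.length then x else 1 + n - x) s' := by
  induction s generalizing x with
  | nil => simp [expand1]
  | cons a l ih =>
    have h1 : (a :: l) ++ s' = a :: (l ++ s') := rfl
    rw [h1]
    show List.replicate a x ++ expand1 1 n (1+n-x) (l ++ s') = _
    rw [ih (flip_mem hx)]
    by_cases h : Even l.length <;>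
      simp [expand1, h, Nat.even_add_one, flip_flip hx, List.append_assoc]

lemma expand_append (hn : 0 < n) {s : List ℕ} (hs : Goodl n s) (s' : List ℕ)
    {t : List ℕ} (ht : OneN n t) :
    expand 1 n (s ++ s') t = expand 1 n s t ++ expand 1 n s' (torsion 1 n s t) := by
  induction t generalizing s s' with
  | nil => simp [expand, torsion_nil]
  | cons x t ih =>
    have hx : x = 1 ∨ x = n := ht x (List.mem_cons_self)
    have ht' : OneN n t := fun z hz => ht z (List.mem_cons_of_mem _ hz)
    show expand 1 n (expand1 1 n x (s ++ s')) t = _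
    rw [expand1_append hn hx]
    rw [ih (expand1_good hn hx hs) _ ht']
    rw [torsion_cons]
    show _ = expand 1 n (expand1 1 n x s) t ++
      expand 1 n (expand1 1 n (1 + n - (expand1 1 n x s).getLastD 0) s') (torsion 1 n (expand1 1 n x s) t)
    congr 3
    rw [expand1_getLastD hn hx hs]
    by_cases h : Even s.length <;> simp [h, flip_flip hx]

lemma expand_take_good (hn : 0 < n) {s : List ℕ} (hs : Goodl n s) {t : List ℕ} (ht : OneN n t)
    (k : ℕ) : Goodl n (expand 1 n s (t.take k)) :=
  expand_good hn hs (oneN_take ht k)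

lemma torsion_comp (hn : 0 < n) {s s' : List ℕ} (hs : Goodl n s) (hs' : Goodl n s')
    {t : List ℕ} (ht : OneN n t) :
    torsion 1 n (s ++ s') t = torsion 1 n s' (torsion 1 n s t) := by
  apply List.ext_getElem
  · simp [torsion_length]
  · intro i h1 h2
    have hi : i < t.length := by simpa [torsion_length] using h1
    rw [torsion_getElem _ _ i hi]
    rw [torsion_getElem _ _ i (by simpa [torsion_length] using h2)]
    rw [← torsion_take]
    rw [expand_append hn hs s' (oneN_take ht _)]
    rw [getLastD_append_right]
    exact (expand_good hn hs' (torsion_oneN hn hs (oneN_take ht _))).1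

lemma torsion_iterate (hn : 0 < n) {t : List ℕ} (ht : OneN n t) (q : ℕ) :
    (torsion 1 n [1])^[q + 1] t = torsion 1 n (List.replicate (q + 1) 1) t := by
  induction q generalizing t with
  | zero => rfl
  | succ q ih =>
    have h1 : List.replicate (q + 2) (1:ℕ) = [1] ++ List.replicate (q + 1) 1 := rfl
    rw [h1, torsion_comp hn ⟨by simp, by intro z hz; simp at hz; omega⟩
        ⟨by simp, by intro z hz; rcases List.eq_of_mem_replicate hz with rfl; left; rfl⟩ ht]
    rw [← ih (torsion_oneN hn ⟨by simp, by intro z hz; simp at hz; omega⟩ ht)]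
    rw [Function.iterate_succ_apply]

lemma goodl_replicate_one (hq : 0 < q) : Goodl n (List.replicate q (1:ℕ)) :=
  ⟨by simp; omega,
   fun z hz => by rcases List.eq_of_mem_replicate hz with rfl; left; rfl⟩

lemma torsion_eq_iff (hn : 0 < n) (hn1 : n ≠ 1) {q : ℕ} (hq : 0 < q) {t : List ℕ}
    (ht : OneN n t) :
    torsion 1 n (List.replicate q 1) t = t ↔
      ∀ k < t.length, Even (expand 1 n (List.replicate q 1) (t.take k)).length := by
  set s := List.replicate q (1:ℕ) with hsdef
  have hs : Goodl n s := goodl_replicate_one hq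
  rw [List.ext_get_iff]
  simp only [torsion_length, true_and, List.get_eq_getElem]
  constructor
  · intro h k hk
    have h2 := h k (by simpa [torsion_length] using hk) hk
    rw [torsion_getElem _ _ k hk] at h2
    have htake : t.take (k+1) = t.take k ++ [t[k]] := by
      rw [List.take_succ, List.getElem?_eq_getElem hk]; rfl
    rw [htake, expand_concat, expand1_getLastD hn (ht _ (List.getElem_mem hk))
      (expand_take_good hn hs ht k)] at h2
    by_contra hodd
    rw [if_neg hodd] at h2
    have hx := ht _ (List.getElem_mem hk)
    rcases hx with hx | hx <;> rw [hx] at h2 <;> omega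
  · intro h k _ hk
    rw [torsion_getElem _ _ k hk]
    have htake : t.take (k+1) = t.take k ++ [t[k]] := by
      rw [List.take_succ, List.getElem?_eq_getElem hk]; rfl
    rw [htake, expand_concat, expand1_getLastD hn (ht _ (List.getElem_mem hk))
      (expand_take_good hn hs ht k)]
    rw [if_pos (h k hk)]
    exact flip_flip (ht _ (List.getElem_mem hk))

/-- the all-ones list -/
local notation "A" => fun k => List.replicate k (1:ℕ)

lemma oneN_replicate (k : ℕ) : OneN n (List.replicate k (1:ℕ)) :=
  fun z hz => by rcases List.eq_of_mem_replicate hz with rfl; left; rfl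

/-- `q` is a period of the all-ones list of length `k` -/
def Per (n q k : ℕ) : Prop :=
  torsion 1 n (List.replicate q 1) (List.replicate k 1) = List.replicate k 1

lemma per_iff (hn : 0 < n) (hn1 : n ≠ 1) {q : ℕ} (hq : 0 < q) (k : ℕ) :
    Per n q k ↔
      ∀ i < k, Even (expand 1 n (List.replicate q 1) (List.replicate i 1)).length := by
  rw [Per, torsion_eq_iff hn hn1 hq (oneN_replicate k)]
  simp only [List.length_replicate]
  constructor
  · intro h i hi
    have := h i hi
    rwa [List.take_replicate, min_eq_left hi.le] at this
  · intro h i hi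
    rw [List.take_replicate, min_eq_left hi.le]
    exact h i hi

lemma per_mono (hn : 0 < n) (hn1 : n ≠ 1) {q : ℕ} (hq : 0 < q) {k i : ℕ} (hik : i ≤ k)
    (h : Per n q k) : Per n q i := by
  rw [per_iff hn hn1 hq] at h ⊢
  exact fun j hj => h j (lt_of_lt_of_le hj hik)

lemma expand_concat_length (s p : List ℕ) (x : ℕ) :
    (expand 1 n s (p ++ [x])).length = (expand 1 n s p).sum := by
  rw [expand_concat, expand1_length]

lemma expand_len_lastfree (s : List ℕ) (x : ℕ) (k : ℕ) :
    (expand 1 n s (List.replicate k 1 ++ [x])).length =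
      (expand 1 n s (List.replicate (k+1) 1)).length := by
  rw [expand_concat_length, List.replicate_succ', expand_concat_length]

lemma expand_split (hn : 0 < n) {q : ℕ} (hq : 0 < q) {u : List ℕ} (hu : OneN n u) :
    (expand 1 n (List.replicate (2*q) 1) u).length =
      (expand 1 n (List.replicate q 1) u).length +
      (expand 1 n (List.replicate q 1) (torsion 1 n (List.replicate q 1) u)).length := by
  have h2q : List.replicate (2*q) (1:ℕ) = List.replicate q 1 ++ List.replicate q 1 := by
    rw [← List.replicate_add]; ring_nf
  rw [h2q, expand_append hn (goodl_replicate_one hq) _ hu, List.length_append]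

/-- pairing lemma F3'' -/
lemma even_M (hn : 0 < n) (hn1 : n ≠ 1) {q k : ℕ} (hq : 0 < q) (h : Per n q k) :
    Even (expand 1 n (List.replicate (2*q) 1) (List.replicate (k+1) 1)).length := by
  rw [expand_split hn hq (oneN_replicate (k+1))]
  have hsplit : List.replicate (k+1) (1:ℕ) = List.replicate k 1 ++ [1] := List.replicate_succ'
  have htor : torsion 1 n (List.replicate q 1) (List.replicate (k+1) 1) =
      List.replicate k 1 ++
        [1 + n - (expand 1 n (List.replicate q 1) (List.replicate k 1 ++ [1])).getLastD 0] := by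
    conv_lhs => rw [hsplit]
    rw [torsion_concat, h]
  rw [htor, expand_len_lastfree]
  exact ⟨_, rfl⟩

/-- doubling lemma -/
lemma per_double (hn : 0 < n) (hn1 : n ≠ 1) {q k : ℕ} (hq : 0 < q) (h : Per n q k) :
    Per n (2*q) (k+1) := by
  rw [per_iff hn hn1 (by omega)]
  intro i hi
  have hperi : Per n q i := per_mono hn hn1 hq (by omega) h
  rw [expand_split hn hq (oneN_replicate i), hperi]
  exact ⟨_, rfl⟩

lemma iter_eq (hn : 0 < n) {q : ℕ} (hq : 0 < q) {t : List ℕ} (ht : OneN n t) :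
    (torsion 1 n [1])^[q] t = torsion 1 n (List.replicate q 1) t := by
  obtain ⟨q', rfl⟩ := Nat.exists_eq_succ_of_ne_zero hq.ne'
  exact torsion_iterate hn ht q'

lemma per_isPeriodicPt (hn : 0 < n) {q k : ℕ} (hq : 0 < q) (h : Per n q k) :
    Function.IsPeriodicPt (torsion 1 n [1]) q (List.replicate k 1) := by
  have : (torsion 1 n [1])^[q] (List.replicate k 1) = List.replicate k 1 := by
    rw [iter_eq hn hq (oneN_replicate k)]; exact h
  exact this

lemma isPeriodicPt_per (hn : 0 < n) {q k : ℕ} (hq : 0 < q)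
    (h : Function.IsPeriodicPt (torsion 1 n [1]) q (List.replicate k 1)) : Per n q k := by
  have h2 : (torsion 1 n [1])^[q] (List.replicate k 1) = List.replicate k 1 := h
  rwa [iter_eq hn hq (oneN_replicate k)] at h2

lemma minP_eq_pow (hn : 0 < n) {j k : ℕ}
    (hper : Per n (2^(j+1)) k) (hnot : ¬ Per n (2^j) k) :
    Function.minimalPeriod (torsion 1 n [1]) (List.replicate k 1) = 2^(j+1) := by
  have hp := per_isPeriodicPt hn (Nat.pow_pos (by norm_num)) hper
  have hdvd := hp.minimalPeriod_dvd
  obtain ⟨i, hij, hP⟩ := (Nat.dvd_prime_pow Nat.prime_two).mp hdvd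
  rcases Nat.lt_or_ge i (j+1) with hlt | hge
  · exfalso
    apply hnot
    apply isPeriodicPt_per hn (Nat.pow_pos (by norm_num))
    exact (Function.isPeriodicPt_minimalPeriod _ _).trans_dvd
      (hP ▸ pow_dvd_pow 2 (by omega))
  · rw [hP]; congr 1; omega

lemma per_one_zero : Per n q 0 := by
  simp [Per, torsion_nil]

lemma per_two_one (hn : 0 < n) (hn1 : n ≠ 1) : Per n 2 1 := by
  rw [per_iff hn hn1 (by norm_num)]
  intro i hi
  interval_cases i
  simp [expand]

lemma not_per_one_one (hn : 0 < n) (hn1 : n ≠ 1) : ¬ Per n 1 1 := by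
  rw [per_iff hn hn1 one_pos]
  intro h
  have := h 0 one_pos
  simp [expand] at this

lemma pow2_pos (j : ℕ) : 0 < 2^j := Nat.pow_pos (by norm_num)

lemma S_chain (hn : 0 < n) (hn1 : n ≠ 1) :
    ∀ j : ℕ, Per n (2^(j+1)) (2*j+1) ∧ Per n (2^j) (2*j) := by
  intro j
  induction j with
  | zero =>
    constructor
    · have := per_two_one hn hn1
      simpa using this
    · simpa using (per_one_zero (q := 1) (n := n))
  | succ j ih =>
    obtain ⟨h1, h0⟩ := ih
    have Meven : Even (expand 1 n (List.replicate (2^(j+1)) 1)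
        (List.replicate (2*j+1) 1)).length := by
      have h := even_M hn hn1 (pow2_pos j) h0
      rwa [show 2*2^j = 2^(j+1) by rw [pow_succ]; ring] at h
    have P2 : Per n (2^(j+1)) (2*j+2) := by
      rw [per_iff hn hn1 (pow2_pos (j+1))]
      intro i hi
      rcases Nat.lt_or_ge i (2*j+1) with h | h
      · exact (per_iff hn hn1 (pow2_pos (j+1)) _).mp h1 i h
      · have hieq : i = 2*j+1 := by omega
        subst hieq; exact Meven
    have P3 : Per n (2^(j+2)) (2*j+3) := by
      have h := per_double hn hn1 (pow2_pos (j+1)) P2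
      rwa [show 2*2^(j+1) = 2^(j+2) by rw [pow_succ]; ring] at h
    constructor
    · rw [show 2*(j+1)+1 = 2*j+3 by omega]; exact P3
    · rw [show 2*(j+1) = 2*j+2 by omega]; exact P2

lemma T_chain (hn : 0 < n) (hn1 : n ≠ 1)
    (hL : ∀ j : ℕ, 0 < j →
      Function.minimalPeriod (torsion 1 n [1]) (List.replicate (2*j-1) 1) = 2^j) :
    ∀ j : ℕ, Per n (2^j) (2*j) := by
  intro j
  induction j with
  | zero => simpa using (per_one_zero (q := 1) (n := n))
  | succ j ih =>
    have hmp := hL (j+1) (by omega)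
    rw [show 2*(j+1)-1 = 2*j+1 by omega] at hmp
    have P1 : Per n (2^(j+1)) (2*j+1) := by
      apply isPeriodicPt_per hn (pow2_pos (j+1))
      rw [← hmp]
      exact Function.isPeriodicPt_minimalPeriod _ _
    have Meven : Even (expand 1 n (List.replicate (2^(j+1)) 1)
        (List.replicate (2*j+1) 1)).length := by
      have h := even_M hn hn1 (pow2_pos j) ih
      rwa [show 2*2^j = 2^(j+1) by rw [pow_succ]; ring] at h
    rw [per_iff hn hn1 (pow2_pos (j+1))]
    intro i hi
    rcases Nat.lt_or_ge i (2*j+1) with h | h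
    · exact (per_iff hn hn1 (pow2_pos (j+1)) _).mp P1 i h
    · have hieq : i = 2*j+1 := by omega
      subst hieq
      exact Meven

theorem main_iff (hn : 0 < n) (hn1 : n ≠ 1) :
    (∀ j : ℕ, 0 < j →
      Function.minimalPeriod (torsion 1 n [1]) (List.replicate (2 * j - 1) 1) = 2 ^ j) ↔
    (∀ j : ℕ, 0 < j →
      Odd (expand 1 n (List.replicate (2 ^ j) 1) (List.replicate (2 * j) 1)).length) := by
  constructor
  · intro hL j hj
    obtain ⟨i, rfl⟩ := Nat.exists_eq_succ_of_ne_zero hj.ne'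
    by_contra hodd
    rw [Nat.not_odd_iff_even] at hodd
    -- we have T_chain: Per n (2^(i+1)) (2*(i+1))
    have hT := T_chain hn hn1 hL (i+1)
    have hPer : Per n (2^(i+1)) (2*(i+1)+1) := by
      rw [per_iff hn hn1 (pow2_pos (i+1))]
      intro k hk
      rcases Nat.lt_or_ge k (2*(i+1)) with h | h
      · exact (per_iff hn hn1 (pow2_pos (i+1)) _).mp hT k h
      · have hkeq : k = 2*(i+1) := by omega
        subst hkeq
        exact hodd
    have hdvd := (per_isPeriodicPt hn (pow2_pos (i+1)) hPer).minimalPeriod_dvd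
    have hmp := hL (i+2) (by omega)
    rw [show 2*(i+2)-1 = 2*(i+1)+1 by omega] at hmp
    rw [hmp] at hdvd
    have hle := Nat.le_of_dvd (pow2_pos (i+1)) hdvd
    have : (2:ℕ)^(i+1) < 2^(i+2) := by
      exact Nat.pow_lt_pow_right (by norm_num) (by omega)
    omega
  · intro hR j hj
    obtain ⟨i, rfl⟩ := Nat.exists_eq_succ_of_ne_zero hj.ne'
    rw [show 2*(i+1)-1 = 2*i+1 by omega]
    apply minP_eq_pow hn (S_chain hn hn1 i).1
    cases i with
    | zero =>
      simpa using not_per_one_one hn hn1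
    | succ i' =>
      intro hp
      have hEv := (per_iff hn hn1 (pow2_pos (i'+1)) _).mp hp (2*(i'+1)) (by omega)
      have hOdd := hR (i'+1) (by omega)
      rw [← Nat.not_even_iff_odd] at hOdd
      exact hOdd hEv

end OC

/-- For even `n > 0`: every orbit of `1^{2j-1}` under `t ↦ C_{1,n}(1, t)` has length
`2^j` (for all `j > 0`) iff `E_{1,n}(1^{2^j}, 1^{2j})` has odd length (for all `j > 0`). -/
theorem orbit_conjecture_iff_odd_length (n : ℕ) (hn : 0 < n) (hne : Even n) :
    (∀ j : ℕ, 0 < j →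
      Function.minimalPeriod (torsion 1 n [1]) (List.replicate (2 * j - 1) 1) = 2 ^ j) ↔
    (∀ j : ℕ, 0 < j →
      Odd (expand 1 n (List.replicate (2 ^ j) 1) (List.replicate (2 * j) 1)).length) := by
  have hn1 : n ≠ 1 := by
    rintro rfl
    exact (Nat.not_even_one) hne
  exact OC.main_iff hn hn1
end

section
/- Let j > 0 and let n and n' be positive even integers with n ≡ n' (mod 2^{j-1}). Then the orbit of the sequence 1^{2j-1} under the map t ↦ C_{1,n}(1, t) on {1, n}^{2j-1} has the same length as the orbit of the sequence 1^{2j-1} under the map t ↦ C_{1,n'}(1, t) on {1, n'}^{2j-1}. In particular, the orbit of 1^{2j-1} under C_{1,n}(1, −) has length 2^j if and only if the orbit of 1^{2j-1} under C_{1,n'}(1, −) has length 2^j. -/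
namespace OrbitInv

/-- coded letter -/
def code (n : ℕ) (b : Bool) : ℕ := if b then n else 1

lemma code_le (n : ℕ) (b : Bool) : code n b ≤ 1 + n := by
  cases b <;> simp [code] <;> omega

lemma code_flip (n : ℕ) (hn : 1 ≤ n) (b : Bool) : 1 + n - code n b = code n (!b) := by
  cases b <;> simp [code] <;> omega

/-- power of a word -/
def pw (B : List ℕ) (a : ℕ) : List ℕ := (List.replicate a B).flatten

@[simp] lemma pw_zero (B : List ℕ) : pw B 0 = [] := rfl

lemma pw_succ (B : List ℕ) (a : ℕ) : pw B (a + 1) = B ++ pw B a := by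
  simp [pw, List.replicate_succ]

@[simp] lemma length_pw (B : List ℕ) (a : ℕ) : (pw B a).length = a * B.length := by
  induction a with
  | zero => simp
  | succ a ih => simp [pw_succ, ih]; ring

@[simp] lemma sum_pw (B : List ℕ) (a : ℕ) : (pw B a).sum = a * B.sum := by
  induction a with
  | zero => simp
  | succ a ih => simp [pw_succ, ih]; ring

lemma pw_two_mul (B : List ℕ) (c : ℕ) : pw B (2 * c) = pw (B ++ B) c := by
  induction c with
  | zero => simp
  | succ c ih =>
    have : 2 * (c + 1) = (2 * c + 1) + 1 := by ring
    rw [this, pw_succ, pw_succ, pw_succ, ih, List.append_assoc]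

lemma pw_single (x : ℕ) (a : ℕ) : pw [x] a = List.replicate a x := by
  induction a with
  | zero => simp
  | succ a ih => simp [pw_succ, ih, List.replicate_succ]

@[simp] lemma expand1_nil (m n x : ℕ) : expand1 m n x [] = [] := rfl

lemma expand1_cons (m n x a : ℕ) (l : List ℕ) :
    expand1 m n x (a :: l) = List.replicate a x ++ expand1 m n (m + n - x) l := rfl

lemma length_expand1 (m n x : ℕ) (u : List ℕ) : (expand1 m n x u).length = u.sum := by
  induction u generalizing x with
  | nil => simp
  | cons a l ih => simp [expand1_cons, ih]

lemma expand1_append (m n : ℕ) {x : ℕ} (hx : x ≤ m + n) (u v : List ℕ) :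
    expand1 m n x (u ++ v) =
      expand1 m n x u ++ expand1 m n (if u.length % 2 = 0 then x else m + n - x) v := by
  induction u generalizing x with
  | nil => simp
  | cons a l ih =>
    have hx' : m + n - x ≤ m + n := by omega
    rw [List.cons_append, expand1_cons, ih hx', expand1_cons, List.append_assoc]
    have hss : m + n - (m + n - x) = x := by omega
    have hph : (if l.length % 2 = 0 then m + n - x else m + n - (m + n - x)) =
        (if (a :: l).length % 2 = 0 then x else m + n - x) := by
      rcases Nat.mod_two_eq_zero_or_one l.length with h1 | h1
      · rw [if_pos h1, List.length_cons, if_neg (by omega)]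
      · rw [if_neg (by omega), List.length_cons, if_pos (by omega), hss]
    rw [hph]

lemma expand1_pw (m n : ℕ) {x : ℕ} (hx : x ≤ m + n) {B : List ℕ}
    (hB : B.length % 2 = 0) (a : ℕ) :
    expand1 m n x (pw B a) = pw (expand1 m n x B) a := by
  induction a with
  | zero => simp
  | succ a ih =>
    rw [pw_succ, expand1_append m n hx, hB]
    simp only [reduceIte]
    rw [ih, pw_succ]

lemma mem_expand1 (m n : ℕ) {x y : ℕ} (hx : x ≤ m + n) {u : List ℕ}
    (hy : y ∈ expand1 m n x u) : y = x ∨ y = m + n - x := by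
  induction u generalizing x with
  | nil => simp at hy
  | cons a l ih =>
    rw [expand1_cons, List.mem_append] at hy
    rcases hy with h | h
    · exact Or.inl (List.eq_of_mem_replicate h)
    · have hx' : m + n - x ≤ m + n := by omega
      rcases ih hx' h with h1 | h1
      · exact Or.inr h1
      · left; omega

lemma expand1_ne_nil (m n x : ℕ) {u : List ℕ} (hpos : ∀ a ∈ u, 1 ≤ a) (hne : u ≠ []) :
    expand1 m n x u ≠ [] := by
  intro h
  have := length_expand1 m n x u
  rw [h] at this
  simp at this
  cases u with
  | nil => exact hne rfl
  | cons a l =>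
    have ha : 1 ≤ a := hpos a (by simp)
    have : a = 0 := by
      have := this; simp [List.sum_cons] at this; omega
    omega

lemma getLastD_expand1 (m n : ℕ) {x : ℕ} (hx : x ≤ m + n) {u : List ℕ}
    (hpos : ∀ a ∈ u, 1 ≤ a) (hne : u ≠ []) :
    (expand1 m n x u).getLastD 0 = if u.length % 2 = 1 then x else m + n - x := by
  induction u generalizing x with
  | nil => exact absurd rfl hne
  | cons a l ih =>
    rw [expand1_cons]
    by_cases hl : l = []
    · subst hl
      have ha : 1 ≤ a := hpos a (by simp)
      simp only [expand1_nil, List.append_nil]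
      cases a with
      | zero => omega
      | succ a0 =>
        have : List.replicate (a0+1) x ≠ [] := by simp
        rw [List.getLastD_eq_getLast?, List.getLast?_replicate]
        simp
    · have hx' : m + n - x ≤ m + n := by omega
      have hpos' : ∀ b ∈ l, 1 ≤ b := fun b hb => hpos b (by simp [hb])
      have hE : expand1 m n (m + n - x) l ≠ [] := expand1_ne_nil m n _ hpos' hl
      have hor : (expand1 m n (m+n-x) l).getLastD 0
          = if l.length % 2 = 1 then m + n - x else m + n - (m+n-x) := ih hx' hpos' hl
      have hv : (expand1 m n (m+n-x) l).getLast? = some ((expand1 m n (m+n-x) l).getLast hE) :=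
        List.getLast?_eq_getLast hE
      rw [List.getLastD_eq_getLast?, List.getLast?_append, hv]
      simp only [Option.some_or, Option.getD_some]
      have hval : (expand1 m n (m+n-x) l).getLast hE
          = if l.length % 2 = 1 then m + n - x else m + n - (m+n-x) := by
        rw [List.getLastD_eq_getLast?, hv] at hor
        simpa using hor
      have hss : m + n - (m + n - x) = x := by omega
      rw [hval, List.length_cons]
      rcases Nat.mod_two_eq_zero_or_one l.length with h1 | h1
      · rw [if_neg (by omega), if_pos (by omega), hss]
      · rw [if_pos h1, if_neg (by omega)]


/-- The depth-graded relation: towers have equal length parities down to depth `d`,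
for every choice of coded phases. -/
def Rel (n n' : ℕ) : ℕ → List ℕ → List ℕ → Prop
  | 0, u, u' => u.length % 2 = u'.length % 2
  | d + 1, u, u' => u.length % 2 = u'.length % 2 ∧
      ∀ b : Bool, Rel n n' d (expand1 1 n (code n b) u) (expand1 1 n' (code n' b) u')

lemma rel_parity {n n' d : ℕ} {u u' : List ℕ} (h : Rel n n' d u u') :
    u.length % 2 = u'.length % 2 := by
  cases d with
  | zero => exact h
  | succ d => exact h.1

lemma rel_step {n n' d : ℕ} {u u' : List ℕ} (h : Rel n n' (d + 1) u u') (b : Bool) :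
    Rel n n' d (expand1 1 n (code n b) u) (expand1 1 n' (code n' b) u') := h.2 b

lemma rel_append {n n' : ℕ} (hn : 1 ≤ n) (hn' : 1 ≤ n') :
    ∀ {d : ℕ} {u u' v v' : List ℕ},
    Rel n n' d u u' → Rel n n' d v v' → Rel n n' d (u ++ v) (u' ++ v') := by
  intro d
  induction d with
  | zero =>
    intro u u' v v' hu hv
    show (u ++ v).length % 2 = (u' ++ v').length % 2
    have h1 : u.length % 2 = u'.length % 2 := hu
    have h2 : v.length % 2 = v'.length % 2 := hv
    simp only [List.length_append]; omega
  | succ d ih =>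
    intro u u' v v' hu hv
    constructor
    · have h1 := hu.1; have h2 := hv.1
      simp only [List.length_append]; omega
    · intro b
      rw [expand1_append 1 n (code_le n b), expand1_append 1 n' (code_le n' b)]
      have hpar : u.length % 2 = u'.length % 2 := hu.1
      rcases Nat.mod_two_eq_zero_or_one u.length with h0 | h0
      · rw [if_pos h0, if_pos (hpar ▸ h0)]
        exact ih (hu.2 b) (hv.2 b)
      · rw [if_neg (by omega), if_neg (by rw [← hpar]; omega),
          code_flip n hn b, code_flip n' hn' b]
        exact ih (hu.2 b) (hv.2 (!b))

lemma modeq_weaken {a b r s : ℕ} (hrs : r ≤ s) (h : a ≡ b [MOD 2 ^ s]) :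
    a ≡ b [MOD 2 ^ r] := Nat.ModEq.of_dvd (pow_dvd_pow 2 hrs) h

lemma modeq_parity {a b s : ℕ} (hs : 1 ≤ s) (h : a ≡ b [MOD 2 ^ s]) : a % 2 = b % 2 := by
  have := modeq_weaken hs h
  simpa [Nat.ModEq] using this

lemma modeq_half {a b s : ℕ} (h : 2 * a ≡ 2 * b [MOD 2 ^ (s + 1)]) :
    a ≡ b [MOD 2 ^ s] := by
  have h2 : 2 * a % (2 * 2 ^ s) = 2 * b % (2 * 2 ^ s) := by
    rw [← pow_succ']; exact h
  rw [Nat.mul_mod_mul_left, Nat.mul_mod_mul_left] at h2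
  exact Nat.eq_of_mul_eq_mul_left (by norm_num) h2

lemma mul_parity_congr {a a' b b' : ℕ} (ha : a % 2 = a' % 2) (hb : b % 2 = b' % 2) :
    a * b % 2 = a' * b' % 2 := by
  rw [Nat.mul_mod, ha, hb, ← Nat.mul_mod]

lemma mul_even_right {a b : ℕ} (hb : b % 2 = 0) : a * b % 2 = 0 := by
  rw [Nat.mul_mod, hb, Nat.mul_zero, Nat.zero_mod]

/-- The three-part power lemma. -/
lemma pow_rel {n n' : ℕ} (hn : 1 ≤ n) (hn' : 1 ≤ n') : ∀ d : ℕ,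
    (∀ B B' a a', B.length % 2 = 0 → B.sum % 2 = 0 → B'.sum % 2 = 0 →
      Rel n n' d B B' → a ≡ a' [MOD 2 ^ (d / 2)] → Rel n n' d (pw B a) (pw B' a')) ∧
    (∀ B B' a a', B.length % 2 = 0 →
      Rel n n' d B B' → a ≡ a' [MOD 2 ^ ((d + 1) / 2)] → Rel n n' d (pw B a) (pw B' a')) ∧
    (∀ B B' a a',
      Rel n n' d B B' → a ≡ a' [MOD 2 ^ (d / 2 + 1)] → Rel n n' d (pw B a) (pw B' a')) := by
  intro d
  induction d with
  | zero =>
    refine ⟨?_, ?_, ?_⟩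
    · intro B B' a a' hB _ _ hR _
      have hB' : B'.length % 2 = 0 := by have := rel_parity hR; omega
      show (pw B a).length % 2 = (pw B' a').length % 2
      rw [length_pw, length_pw, mul_even_right hB, mul_even_right hB']
    · intro B B' a a' hB hR _
      have hB' : B'.length % 2 = 0 := by have := rel_parity hR; omega
      show (pw B a).length % 2 = (pw B' a').length % 2
      rw [length_pw, length_pw, mul_even_right hB, mul_even_right hB']
    · intro B B' a a' hR hm
      have hpar : B.length % 2 = B'.length % 2 := rel_parity hR
      have ha : a % 2 = a' % 2 := modeq_parity (by norm_num) hm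
      show (pw B a).length % 2 = (pw B' a').length % 2
      rw [length_pw, length_pw]
      exact mul_parity_congr ha hpar
  | succ d ih =>
    obtain ⟨ihs, ihe, iha⟩ := ih
    -- even-length ∧ even-sum case at d+1
    have Hs : ∀ B B' a a', B.length % 2 = 0 → B.sum % 2 = 0 → B'.sum % 2 = 0 →
        Rel n n' (d+1) B B' → a ≡ a' [MOD 2 ^ ((d+1) / 2)] →
        Rel n n' (d+1) (pw B a) (pw B' a') := by
      intro B B' a a' hB hBs hBs' hR hm
      have hB' : B'.length % 2 = 0 := by have := rel_parity hR; omega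
      constructor
      · rw [length_pw, length_pw, mul_even_right hB, mul_even_right hB']
      · intro b
        rw [expand1_pw 1 n (code_le n b) hB, expand1_pw 1 n' (code_le n' b) hB']
        refine ihe _ _ _ _ ?_ (hR.2 b) ?_
        · rw [length_expand1]; exact hBs
        · exact hm
    -- even-length case at d+1
    have He : ∀ B B' a a', B.length % 2 = 0 →
        Rel n n' (d+1) B B' → a ≡ a' [MOD 2 ^ ((d + 2) / 2)] →
        Rel n n' (d+1) (pw B a) (pw B' a') := by
      intro B B' a a' hB hR hm
      have hB' : B'.length % 2 = 0 := by have := rel_parity hR; omega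
      constructor
      · rw [length_pw, length_pw, mul_even_right hB, mul_even_right hB']
      · intro b
        rw [expand1_pw 1 n (code_le n b) hB, expand1_pw 1 n' (code_le n' b) hB']
        refine iha _ _ _ _ (hR.2 b) ?_
        have hdd : (d + 2) / 2 = d / 2 + 1 := by omega
        rwa [hdd] at hm
    refine ⟨Hs, ?_, ?_⟩
    · intro B B' a a' hB hR hm
      refine He B B' a a' hB hR ?_
      have hdd : (d + 1 + 1) / 2 = (d + 2) / 2 := by omega
      rwa [hdd] at hm
    · intro B B' a a' hR hm
      rcases Nat.mod_two_eq_zero_or_one B.length with hB | hB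
      · exact He B B' a a' hB hR (modeq_weaken (by omega) hm)
      · -- odd length base
        have heven : ∀ c c', c % 2 = 0 → c' % 2 = 0 → c ≡ c' [MOD 2 ^ ((d+1) / 2 + 1)] →
            Rel n n' (d+1) (pw B c) (pw B' c') := by
          intro c c' hc hc' hcm
          obtain ⟨e, he⟩ : ∃ e, c = 2 * e := ⟨c / 2, by omega⟩
          obtain ⟨e', he'⟩ : ∃ e', c' = 2 * e' := ⟨c' / 2, by omega⟩
          rw [he, pw_two_mul, he', pw_two_mul]
          refine Hs _ _ _ _ ?_ ?_ ?_ (rel_append hn hn' hR hR) ?_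
          · simp only [List.length_append]; omega
          · simp only [List.sum_append]; omega
          · simp only [List.sum_append]; omega
          · exact modeq_half (he ▸ he' ▸ hcm)
        have hpar2 : a % 2 = a' % 2 := modeq_parity (by omega) hm
        rcases Nat.mod_two_eq_zero_or_one a with ha | ha
        · exact heven a a' ha (by omega) hm
        · have ha' : a' % 2 = 1 := by omega
          obtain ⟨e, rfl⟩ : ∃ e, a = e + 1 := ⟨a - 1, by omega⟩
          obtain ⟨e', rfl⟩ : ∃ e', a' = e' + 1 := ⟨a' - 1, by omega⟩
          rw [pw_succ, pw_succ]
          refine rel_append hn hn' hR (heven e e' (by omega) (by omega) ?_)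
          exact (Nat.ModEq.add_right_cancel' 1 hm)

/-- The letters lemma: drives the whole induction; needs `n ≡ n'` to `⌈(d+1)/2⌉` bits. -/
lemma letters {n n' : ℕ} (hn : 1 ≤ n) (hn' : 1 ≤ n') : ∀ d : ℕ,
    n ≡ n' [MOD 2 ^ ((d + 1) / 2)] →
    Rel n n' d [1] [1] ∧ Rel n n' d [n] [n'] := by
  intro d
  induction d with
  | zero => intro _; exact ⟨rfl, rfl⟩
  | succ d ih =>
    intro hm
    have ihm := ih (modeq_weaken (by omega) hm)
    have hexp : ∀ (N : ℕ) (b : Bool) (c : ℕ), expand1 1 N (code N b) [c]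
        = pw [code N b] c := by
      intro N b c
      rw [expand1_cons, expand1_nil, List.append_nil, pw_single]
    have hbase : ∀ b : Bool, Rel n n' d [code n b] [code n' b] := by
      intro b; cases b
      · exact ihm.1
      · exact ihm.2
    constructor
    · refine ⟨rfl, ?_⟩
      intro b
      rw [hexp n b 1, hexp n' b 1, pw_single, pw_single]
      simp only [List.replicate_one]
      exact hbase b
    · refine ⟨rfl, ?_⟩
      intro b
      rw [hexp n b n, hexp n' b n']
      refine (pow_rel hn hn' d).2.2 _ _ _ _ (hbase b) ?_
      have hdd : (d + 1 + 1) / 2 = d / 2 + 1 := by omega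
      rwa [hdd] at hm

def dec (n : ℕ) (bs : List Bool) : List ℕ := bs.map (code n)

@[simp] lemma length_dec (n : ℕ) (bs : List Bool) : (dec n bs).length = bs.length := by
  simp [dec]

lemma dec_append (n : ℕ) (bs cs : List Bool) :
    dec n (bs ++ cs) = dec n bs ++ dec n cs := by simp [dec]

lemma expand_nil (m n : ℕ) (s : List ℕ) : expand m n s [] = s := rfl

lemma expand_cons (m n : ℕ) (s : List ℕ) (x : ℕ) (t : List ℕ) :
    expand m n s (x :: t) = expand m n (expand1 m n x s) t := rfl

lemma expand_concat (m n : ℕ) (s : List ℕ) (t : List ℕ) (x : ℕ) :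
    expand m n s (t ++ [x]) = expand1 m n x (expand m n s t) := by
  induction t generalizing s with
  | nil => rfl
  | cons y t ih => rw [List.cons_append, expand_cons, expand_cons, ih]

lemma rel_tower_parity {n n' : ℕ} :
    ∀ (bs : List Bool) {d : ℕ} {u u' : List ℕ}, Rel n n' d u u' → bs.length ≤ d →
    (expand 1 n u (dec n bs)).length % 2 = (expand 1 n' u' (dec n' bs)).length % 2 := by
  intro bs
  induction bs with
  | nil => intro d u u' h _; exact rel_parity h
  | cons b bs ih =>
    intro d u u' h hlen
    cases d with
    | zero => simp at hlen
    | succ e =>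
      simp only [dec, List.map_cons, expand_cons]
      exact ih (h.2 b) (by simpa using hlen)

/-- all entries are `1` or `n` -/
def Okl (n : ℕ) (u : List ℕ) : Prop := ∀ a ∈ u, a = 1 ∨ a = n

lemma okl_pos {n : ℕ} (hn : 1 ≤ n) {u : List ℕ} (h : Okl n u) : ∀ a ∈ u, 1 ≤ a := by
  intro a ha; rcases h a ha with h1 | h1 <;> omega

lemma okl_expand1 {n : ℕ} (hn : 1 ≤ n) {u : List ℕ} (h : Okl n u) (b : Bool) :
    Okl n (expand1 1 n (code n b) u) := by
  intro a ha
  rcases mem_expand1 1 n (code_le n b) ha with h1 | h1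
  · subst h1; cases b <;> simp [code]
  · rw [h1, code_flip n hn b]; cases b <;> simp [code]

lemma okl_tower {n : ℕ} (hn : 1 ≤ n) :
    ∀ (bs : List Bool) {u : List ℕ}, Okl n u → u ≠ [] →
    Okl n (expand 1 n u (dec n bs)) ∧ expand 1 n u (dec n bs) ≠ [] := by
  intro bs
  induction bs with
  | nil => intro u h hne; exact ⟨h, hne⟩
  | cons b bs ih =>
    intro u h hne
    simp only [dec, List.map_cons, expand_cons]
    exact ih (okl_expand1 hn h b) (expand1_ne_nil 1 n _ (okl_pos hn h) hne)

lemma okl_one (n : ℕ) : Okl n [1] := by intro a ha; simp at ha; exact Or.inl ha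

/-- closed formula for the torsion of a coded sequence -/
lemma torsion_formula {N : ℕ} (hN : 1 ≤ N) (bs : List Bool) :
    torsion 1 N [1] (dec N bs) = dec N ((List.range bs.length).map
      (fun k => if (expand 1 N [1] (dec N (bs.take k))).length % 2 = 1
        then !(bs.getD k false) else bs.getD k false)) := by
  unfold torsion
  rw [length_dec]
  have hrhs : ∀ F : ℕ → Bool, dec N ((List.range bs.length).map F)
      = (List.range bs.length).map (fun k => code N (F k)) := by
    intro F
    show ((List.range bs.length).map F).map (code N) = _
    rw [List.map_map]
    rfl
  rw [hrhs]
  apply List.map_congr_left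
  intro k hk
  have hk' : k < bs.length := List.mem_range.mp hk
  have hb : bs.getD k false = bs[k] := List.getD_eq_getElem bs false hk'
  have htake : bs.take (k+1) = bs.take k ++ [bs.getD k false] := by
    rw [List.take_succ, List.getElem?_eq_getElem hk', hb]
    rfl
  have h0 : dec N (bs.take (k+1)) = (dec N bs).take (k+1) :=
    List.map_take (f := code N) (l := bs) (i := k+1)
  have hone : dec N [bs.getD k false] = [code N (bs.getD k false)] := rfl
  have hdec : (dec N bs).take (k+1)
      = dec N (bs.take k) ++ [code N (bs.getD k false)] := by
    rw [← h0, htake, dec_append, hone]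
  rw [hdec, expand_concat]
  have hok := okl_tower hN (bs.take k) (okl_one N) (by simp)
  rw [getLastD_expand1 1 N (code_le N _) (okl_pos hN hok.1) hok.2]
  rcases Nat.mod_two_eq_zero_or_one (expand 1 N [1] (dec N (bs.take k))).length with h1 | h1
  · rw [if_neg (by omega), if_neg (by omega), code_flip N hN, code_flip N hN, Bool.not_not]
  · rw [if_pos h1, if_pos h1, code_flip N hN]

lemma torsion_dec {n n' : ℕ} (hn : 1 ≤ n) (hn' : 1 ≤ n') {D : ℕ}
    (hRel : Rel n n' D [1] [1]) (bs : List Bool) (hlen : bs.length ≤ D + 1) :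
    ∃ cs : List Bool, cs.length = bs.length ∧
      torsion 1 n [1] (dec n bs) = dec n cs ∧ torsion 1 n' [1] (dec n' bs) = dec n' cs := by
  refine ⟨(List.range bs.length).map
      (fun k => if (expand 1 n [1] (dec n (bs.take k))).length % 2 = 1
        then !(bs.getD k false) else bs.getD k false), by simp, torsion_formula hn bs, ?_⟩
  rw [torsion_formula hn' bs]
  congr 1
  apply List.map_congr_left
  intro k hk
  have hk' : k < bs.length := List.mem_range.mp hk
  have hpar : (expand 1 n [1] (dec n (bs.take k))).length % 2
      = (expand 1 n' [1] (dec n' (bs.take k))).length % 2 := by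
    apply rel_tower_parity (bs.take k) hRel
    rw [List.length_take]
    omega
  rw [hpar]

lemma dec_inj {n : ℕ} (hn : 2 ≤ n) {cs cs' : List Bool} (h : dec n cs = dec n cs') :
    cs = cs' := by
  have hcode : Function.Injective (code n) := by
    intro a b hab
    cases a <;> cases b <;> simp [code] at hab ⊢ <;> omega
  exact List.map_injective_iff.mpr hcode h

lemma dec_replicate_false (n L : ℕ) : dec n (List.replicate L false) = List.replicate L 1 := by
  simp [dec, code]

lemma orbit_common {n n' : ℕ} (hn : 1 ≤ n) (hn' : 1 ≤ n') {D : ℕ}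
    (hRel : Rel n n' D [1] [1]) {L : ℕ} (hL : L ≤ D + 1) (k : ℕ) :
    ∃ cs : List Bool, cs.length = L ∧
      (torsion 1 n [1])^[k] (List.replicate L 1) = dec n cs ∧
      (torsion 1 n' [1])^[k] (List.replicate L 1) = dec n' cs := by
  induction k with
  | zero =>
    exact ⟨List.replicate L false, by simp, by simp [dec_replicate_false],
      by simp [dec_replicate_false]⟩
  | succ k ih =>
    obtain ⟨cs, hcl, h1, h2⟩ := ih
    obtain ⟨cs2, hcl2, g1, g2⟩ := torsion_dec hn hn' hRel cs (by omega)
    refine ⟨cs2, by omega, ?_, ?_⟩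
    · rw [Function.iterate_succ_apply', h1, g1]
    · rw [Function.iterate_succ_apply', h2, g2]

lemma isPeriodicPt_iff {α : Type*} (f : α → α) (k : ℕ) (x : α) :
    Function.IsPeriodicPt f k x ↔ f^[k] x = x := Iff.rfl

lemma minimalPeriod_congr {α β : Type*} {f : α → α} {g : β → β} {x : α} {y : β}
    (h : ∀ k, f^[k] x = x ↔ g^[k] y = y) :
    Function.minimalPeriod f x = Function.minimalPeriod g y := by
  have hmem : x ∈ Function.periodicPts f ↔ y ∈ Function.periodicPts g := by
    unfold Function.periodicPts
    simp only [Set.mem_setOf_eq]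
    constructor
    · rintro ⟨k, hk, hp⟩; exact ⟨k, hk, (h k).mp hp⟩
    · rintro ⟨k, hk, hp⟩; exact ⟨k, hk, (h k).mpr hp⟩
  by_cases hx : x ∈ Function.periodicPts f
  · have hy := hmem.mp hx
    apply le_antisymm
    · exact Function.IsPeriodicPt.minimalPeriod_le
        (Function.minimalPeriod_pos_of_mem_periodicPts hy)
        ((h _).mpr (Function.isPeriodicPt_minimalPeriod g y))
    · exact Function.IsPeriodicPt.minimalPeriod_le
        (Function.minimalPeriod_pos_of_mem_periodicPts hx)
        ((h _).mp (Function.isPeriodicPt_minimalPeriod f x))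
  · have hy : y ∉ Function.periodicPts g := fun hy => hx (hmem.mpr hy)
    rw [Function.minimalPeriod_eq_zero_of_notMem_periodicPts hx,
      Function.minimalPeriod_eq_zero_of_notMem_periodicPts hy]

end OrbitInv

/-- For `j > 0` and positive even `n ≡ n' (mod 2^{j-1})`, the orbit of `1^{2j-1}` under
`t ↦ C_{1,n}(1, t)` has the same length as the orbit of `1^{2j-1}` under
`t ↦ C_{1,n'}(1, t)`; in particular one has length `2^j` iff the other does. -/
theorem orbit_length_mod_invariant (j n n' : ℕ) (hj : 0 < j)
    (hn : 0 < n) (hn' : 0 < n') (hne : Even n) (hne' : Even n')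
    (hmod : n ≡ n' [MOD 2 ^ (j - 1)]) :
    Function.minimalPeriod (torsion 1 n [1]) (List.replicate (2 * j - 1) 1) =
      Function.minimalPeriod (torsion 1 n' [1]) (List.replicate (2 * j - 1) 1) ∧
    (Function.minimalPeriod (torsion 1 n [1]) (List.replicate (2 * j - 1) 1) = 2 ^ j ↔
      Function.minimalPeriod (torsion 1 n' [1]) (List.replicate (2 * j - 1) 1) = 2 ^ j) := by
  obtain ⟨r, hr⟩ := hne
  obtain ⟨r', hr'⟩ := hne'
  have hn2 : 2 ≤ n := by omega
  have hn2' : 2 ≤ n' := by omega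
  set D := 2 * (j - 1) with hD
  have hDj : (D + 1) / 2 = j - 1 := by omega
  have hRel : OrbitInv.Rel n n' D [1] [1] := by
    refine (OrbitInv.letters (by omega) (by omega) D ?_).1
    rwa [hDj]
  have hL : 2 * j - 1 = D + 1 := by omega
  have key : ∀ k, (torsion 1 n [1])^[k] (List.replicate (2 * j - 1) 1) =
      List.replicate (2 * j - 1) 1 ↔
      (torsion 1 n' [1])^[k] (List.replicate (2 * j - 1) 1) =
      List.replicate (2 * j - 1) 1 := by
    intro k
    obtain ⟨cs, hcl, h1, h2⟩ :=
      OrbitInv.orbit_common (by omega) (by omega) hRel (L := 2 * j - 1) (by omega) k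
    have e1 : (torsion 1 n [1])^[k] (List.replicate (2 * j - 1) 1) =
        List.replicate (2 * j - 1) 1 ↔ cs = List.replicate (2 * j - 1) false := by
      rw [h1, ← OrbitInv.dec_replicate_false n (2 * j - 1)]
      exact ⟨fun h => OrbitInv.dec_inj hn2 h, fun h => by rw [h]⟩
    have e2 : (torsion 1 n' [1])^[k] (List.replicate (2 * j - 1) 1) =
        List.replicate (2 * j - 1) 1 ↔ cs = List.replicate (2 * j - 1) false := by
      rw [h2, ← OrbitInv.dec_replicate_false n' (2 * j - 1)]
      exact ⟨fun h => OrbitInv.dec_inj hn2' h, fun h => by rw [h]⟩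
    rw [e1, e2]
  have hmain := OrbitInv.minimalPeriod_congr key
  exact ⟨hmain, by rw [hmain]⟩
end

section
/- Let j > 0, let n and n' be positive even integers with n ≡ n' (mod 2^{j-1}), and let 1 ≤ k ≤ 2j−1. For a sequence s, let F(s) be the sequence obtained from s by replacing every term not equal to 1 with 0, and for a sequence s with values in {1, 0}, let G_n(s) be the sequence obtained by replacing every 0 with n. Then: (a) for every t in {1, 0}^k, F(C_{1,n}(1, G_n(t))) = F(C_{1,n'}(1, G_{n'}(t))); and (b) for every t in {1, 0}^k, F(C_{1,n}(n, G_n(t))) = F(C_{1,n'}(n', G_{n'}(t))). -/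
/-- `F s` replaces every term of `s` not equal to `1` with `0`. -/
def keepOnes (s : List ℕ) : List ℕ := s.map fun a => if a = 1 then 1 else 0

/-- `G_n s` replaces every occurrence of `0` in `s` with `n`. -/
def substZeros (n : ℕ) (s : List ℕ) : List ℕ := s.map fun a => if a = 0 then n else a

/-! ### Auxiliary bit-level theory -/

namespace TMI

/-- Bit-level expansion: each `false` becomes one bit, each `true` becomes `n` bits,
with block bits alternating starting from `g`. -/
def Xb (n : ℕ) : Bool → List Bool → List Bool
  | _, [] => []
  | g, a :: w => List.replicate (if a then n else 1) g ++ Xb n (!g) w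

/-- `Nb n r w` : the string `w` is `r`-negligible. -/
def Nb (n : ℕ) : ℕ → List Bool → Prop
  | 0, w => Even w.length
  | r + 1, w => Even w.length ∧ ∀ g, Nb n r (Xb n g w)

/-- `Ins n r b b'` : `b'` is obtained from `b` by inserting `r`-negligible strings. -/
inductive Ins (n r : ℕ) : List Bool → List Bool → Prop
  | nil : Ins n r [] []
  | cons (a : Bool) {t t' : List Bool} : Ins n r t t' → Ins n r (a :: t) (a :: t')
  | ins (w : List Bool) {t t' : List Bool} : Nb n r w → Ins n r t t' → Ins n r t (w ++ t')

/-- Iterated bit-level expansion. -/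
def chain (n : ℕ) : List Bool → List Bool → List Bool
  | s, [] => s
  | s, g :: bs => chain n (Xb n g s) bs

lemma Xb_nil (n : ℕ) (g : Bool) : Xb n g [] = [] := rfl

lemma Xb_cons (n : ℕ) (g a : Bool) (w : List Bool) :
    Xb n g (a :: w) = List.replicate (if a then n else 1) g ++ Xb n (!g) w := rfl

lemma Xb_length (n : ℕ) : ∀ (w : List Bool) (g : Bool),
    (Xb n g w).length = (w.map fun a => if a then n else 1).sum
  | [], _ => rfl
  | a :: w, g => by
      simp [Xb_cons, Xb_length n w (!g)]

lemma Xb_length_indep (n : ℕ) (w : List Bool) (g g' : Bool) :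
    (Xb n g w).length = (Xb n g' w).length := by
  rw [Xb_length, Xb_length]

lemma Xb_append' (n : ℕ) : ∀ (u v : List Bool) (g : Bool),
    Xb n g (u ++ v) = Xb n g u ++ Xb n (if Even u.length then g else !g) v
  | [], v, g => by simp [Xb_nil]
  | a :: u, v, g => by
      have h := Xb_append' n u v (!g)
      simp only [List.cons_append, Xb_cons, h, List.append_assoc, List.length_cons]
      have : (if Even u.length then !g else !!g) = (if Even (u.length + 1) then g else !g) := by
        rcases Nat.even_or_odd u.length with he | ho
        · simp [he, Nat.even_add_one, he]
        · simp [Nat.not_even_iff_odd.mpr ho, Nat.even_add_one,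
            (Nat.not_even_iff_odd.mpr ho : ¬ Even u.length)]
      rw [this]

lemma Xb_append (n : ℕ) (u v : List Bool) (g : Bool) (hu : Even u.length) :
    Xb n g (u ++ v) = Xb n g u ++ Xb n g v := by
  rw [Xb_append', if_pos hu]

lemma Xb_ne_nil {n : ℕ} (hn : 0 < n) {s : List Bool} (hs : s ≠ []) (g : Bool) :
    Xb n g s ≠ [] := by
  cases s with
  | nil => exact absurd rfl hs
  | cons a w =>
      simp only [Xb_cons]
      intro h
      rcases List.append_eq_nil_iff.mp h with ⟨h1, _⟩
      have : (List.replicate (if a then n else 1) (g : Bool)).length = 0 := by rw [h1]; rfl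
      simp only [List.length_replicate] at this
      split at this <;> omega

lemma Nb_even {n r : ℕ} {w : List Bool} (h : Nb n r w) : Even w.length := by
  cases r with
  | zero => exact h
  | succ r => exact h.1

lemma Nb_succ {n r : ℕ} {w : List Bool} (h : Nb n (r + 1) w) : Nb n r w := by
  induction r generalizing w with
  | zero => exact h.1
  | succ r ih => exact ⟨h.1, fun g => ih (h.2 g)⟩

lemma Nb_le {n r r' : ℕ} (hle : r' ≤ r) {w : List Bool} (h : Nb n r w) : Nb n r' w := by
  induction hle with
  | refl => exact h
  | @step m _ ih => exact ih (Nb_succ h)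

lemma Nb_append {n : ℕ} : ∀ (r : ℕ) {u v : List Bool}, Nb n r u → Nb n r v →
    Nb n r (u ++ v) := by
  intro r
  induction r with
  | zero =>
      intro u v hu hv
      simpa [Nb, List.length_append] using (hu : Even u.length).add hv
  | succ r ih =>
      intro u v hu hv
      refine ⟨by simpa [List.length_append] using hu.1.add hv.1, fun g => ?_⟩
      rw [Xb_append n u v g hu.1]
      exact ih (hu.2 g) (hv.2 g)

lemma S1 (n : ℕ) (p : List Bool) : Nb n 1 (p ++ p) := by
  refine ⟨by simp [List.length_append], fun g => ?_⟩
  show Even (Xb n g (p ++ p)).length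
  rw [Xb_length]
  simp only [List.map_append, List.sum_append]
  exact ⟨(p.map fun a => if a then n else 1).sum, rfl⟩

lemma S2 {n : ℕ} {v : List Bool} (hv : Even v.length) : Nb n 2 (v ++ v) := by
  refine ⟨by simp [List.length_append], fun g => ?_⟩
  rw [Xb_append n v v g hv]
  exact S1 n _

lemma D2 {n : ℕ} : ∀ r : ℕ, 1 ≤ r → ∀ {w : List Bool}, Nb n r w → Nb n (r + 2) (w ++ w) := by
  intro r hr
  induction hr with
  | refl =>
      intro w h
      refine ⟨by simp [List.length_append], fun g => ?_⟩
      rw [Xb_append n w w g h.1]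
      exact S2 (h.2 g)
  | @step m hm ih =>
      intro w h
      refine ⟨by simp [List.length_append], fun g => ?_⟩
      rw [Xb_append n w w g h.1]
      exact ih (h.2 g)

lemma Nb_replicate {n : ℕ} : ∀ e : ℕ, 1 ≤ e → ∀ (m : ℕ) (c : Bool), 2 ^ e ∣ m →
    Nb n (2 * e - 1) (List.replicate m c) := by
  intro e he
  induction e, he using Nat.le_induction with
  | base =>
      intro m c hm
      have hm2 : 2 ∣ m := by simpa using hm
      refine ⟨by simpa using (even_iff_two_dvd.mpr hm2), fun g => ?_⟩
      show Even (Xb n g (List.replicate m c)).length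
      rw [Xb_length]
      simp only [List.map_replicate, List.sum_replicate, smul_eq_mul]
      exact (even_iff_two_dvd.mpr hm2).mul_right _
  | succ e he ih =>
      intro m c hm
      obtain ⟨d, hd⟩ := hm
      have hm' : m = 2 ^ e * d + 2 ^ e * d := by
        rw [hd, pow_succ]; ring
      have hsplit : List.replicate m c =
          List.replicate (2 ^ e * d) c ++ List.replicate (2 ^ e * d) c := by
        rw [hm', List.replicate_add]
      have h1 : Nb n (2 * e - 1) (List.replicate (2 ^ e * d) c) := ih _ c ⟨d, rfl⟩
      have h2 := D2 (2 * e - 1) (by omega : 1 ≤ 2 * e - 1) h1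
      have harith : 2 * (e + 1) - 1 = 2 * e - 1 + 2 := by omega
      rw [hsplit, harith]
      exact h2

lemma Ins_refl (n r : ℕ) : ∀ w : List Bool, Ins n r w w
  | [] => Ins.nil
  | a :: w => Ins.cons a (Ins_refl n r w)

lemma Ins_parity {n r : ℕ} : ∀ {u v : List Bool}, Ins n r u v →
    v.length % 2 = u.length % 2 := by
  intro u v h
  induction h with
  | nil => rfl
  | cons a _ ih => simp only [List.length_cons]; omega
  | ins w hw _ ih =>
      obtain ⟨q, hq⟩ := Nb_even hw
      simp only [List.length_append, hq]
      omega

lemma Ins_append_left {n r : ℕ} : ∀ (u : List Bool) {t t' : List Bool},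
    Ins n r t t' → Ins n r (u ++ t) (u ++ t')
  | [], _, _, h => h
  | a :: u, _, _, h => Ins.cons a (Ins_append_left u h)

lemma Ins_step {n n' e : ℕ} (hn : 0 < n) (he : 1 ≤ e) (hle : n ≤ n')
    (hdvd : 2 ^ e ∣ n' - n) {r : ℕ} (hr : r ≤ 2 * e - 1) :
    ∀ {b b' : List Bool}, Ins n' (r + 1) b b' →
      ∀ g : Bool, Ins n' r (Xb n g b) (Xb n' g b') := by
  intro b b' h
  induction h with
  | nil => intro g; exact Ins.nil
  | @cons a t t' _ ih =>
      intro g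
      cases a with
      | false =>
          show Ins n' r (List.replicate 1 g ++ Xb n (!g) t)
            (List.replicate 1 g ++ Xb n' (!g) t')
          simp only [List.replicate_one, List.singleton_append]
          exact Ins.cons g (ih (!g))
      | true =>
          show Ins n' r (List.replicate n g ++ Xb n (!g) t)
            (List.replicate n' g ++ Xb n' (!g) t')
          have hrep : List.replicate n' g = List.replicate n g ++ List.replicate (n' - n) g := by
            rw [← List.replicate_add]
            congr 1
            omega
          rw [hrep, List.append_assoc]
          refine Ins_append_left (List.replicate n g) ?_
          exact Ins.ins (List.replicate (n' - n) g)
            (Nb_le hr (Nb_replicate e he (n' - n) g hdvd)) (ih (!g))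
  | @ins w t t' hw _ ih =>
      intro g
      rw [Xb_append n' w t' g (Nb_even hw)]
      exact Ins.ins (Xb n' g w) (hw.2 g) (ih g)

lemma chain_nil (n : ℕ) (s : List Bool) : chain n s [] = s := rfl

lemma chain_cons (n : ℕ) (s : List Bool) (g : Bool) (bs : List Bool) :
    chain n s (g :: bs) = chain n (Xb n g s) bs := rfl

lemma chain_append (n : ℕ) : ∀ (bs cs s : List Bool),
    chain n s (bs ++ cs) = chain n (chain n s bs) cs
  | [], _, _ => rfl
  | g :: bs, cs, s => by rw [List.cons_append, chain_cons, chain_cons, chain_append n bs cs]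

lemma chain_ne_nil {n : ℕ} (hn : 0 < n) : ∀ (bs s : List Bool), s ≠ [] →
    chain n s bs ≠ []
  | [], s, hs => hs
  | g :: bs, s, hs => by
      rw [chain_cons]
      exact chain_ne_nil hn bs _ (Xb_ne_nil hn hs g)

lemma chain_ins {n n' e : ℕ} (hn : 0 < n) (hle : n ≤ n') (hdvd : 2 ^ e ∣ n' - n)
    (s : List Bool) :
    ∀ qs : List Bool, qs ≠ [] → qs.length ≤ 2 * e →
      Ins n' (2 * e - qs.length) (chain n s qs) (chain n' s qs) := by
  intro qs
  induction qs using List.reverseRecOn with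
  | nil => intro h; exact absurd rfl h
  | append_singleton rs g ih =>
      intro _ hlen
      have he : 1 ≤ e := by
        simp only [List.length_append, List.length_singleton] at hlen
        omega
      rw [chain_append, chain_append, chain_cons, chain_cons, chain_nil, chain_nil]
      rcases eq_or_ne rs [] with hrs | hrs
      · subst hrs
        simp only [chain_nil, List.length_append, List.length_nil, List.length_singleton]
        have h0 : Ins n' (2 * e - 1 + 1) s s := Ins_refl _ _ s
        have := Ins_step hn he hle hdvd (le_refl (2 * e - 1)) h0 g
        simpa using this
      · have hlen' : rs.length ≤ 2 * e := by
          simp only [List.length_append, List.length_singleton] at hlen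
          omega
        have hIH := ih hrs hlen'
        have h1 : 2 * e - rs.length = (2 * e - rs.length - 1) + 1 := by
          simp only [List.length_append, List.length_singleton] at hlen
          have : rs.length ≠ 0 := by
            intro h; exact hrs (List.length_eq_zero_iff.mp h)
          omega
        rw [h1] at hIH
        have := Ins_step hn he hle hdvd (by omega) hIH g
        have harith : 2 * e - (rs ++ [g]).length = 2 * e - rs.length - 1 := by
          simp only [List.length_append, List.length_singleton]
          omega
        rw [harith]
        exact this

lemma chain_parity {n n' e : ℕ} (hn : 0 < n) (hn' : 0 < n') (hle : n ≤ n')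
    (hdvd : 2 ^ e ∣ n' - n) (s : List Bool) (qs : List Bool) (hlen : qs.length ≤ 2 * e) :
    (chain n s qs).length % 2 = (chain n' s qs).length % 2 := by
  rcases eq_or_ne qs [] with h | h
  · subst h; rfl
  · exact (Ins_parity (chain_ins hn hle hdvd s qs h hlen)).symm

/-! ### Last-element lemmas -/

lemma getLastD_replicate {α : Type*} (a d : α) : ∀ m : ℕ, 0 < m →
    (List.replicate m a).getLastD d = a
  | 1, _ => rfl
  | m + 2, _ => by
      rw [List.replicate_succ, List.getLastD_cons]
      exact getLastD_replicate a a (m + 1) (by omega)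

lemma getLastD_irrel {α : Type*} : ∀ (l : List α), l ≠ [] → ∀ d d' : α,
    l.getLastD d = l.getLastD d'
  | [], h, _, _ => absurd rfl h
  | [_], _, _, _ => rfl
  | a :: b :: l, _, d, d' =>
      (List.getLastD_cons (a := d) (b := a) (l := b :: l)).trans
        (List.getLastD_cons (a := d') (b := a) (l := b :: l)).symm

lemma getLastD_append {α : Type*} (d : α) : ∀ (l1 l2 : List α), l2 ≠ [] →
    (l1 ++ l2).getLastD d = l2.getLastD d
  | [], _, _ => rfl
  | a :: l1, l2, h => by
      rw [List.cons_append, List.getLastD_cons]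
      exact (getLastD_append a l1 l2 h).trans (getLastD_irrel l2 h a d)

lemma getLastD_Xb {n : ℕ} (hn : 0 < n) : ∀ (s : List Bool), s ≠ [] → ∀ g : Bool,
    (Xb n g s).getLastD false = (g ^^ decide ((s.length - 1) % 2 = 1))
  | [], hs, _ => absurd rfl hs
  | [a], _, g => by
      simp only [Xb_cons, Xb_nil, List.append_nil, List.length_singleton]
      rw [getLastD_replicate g false _ (by split <;> omega)]
      simp
  | a :: b :: s, _, g => by
      rw [Xb_cons, getLastD_append false _ _ (Xb_ne_nil hn (by simp) (!g)),
        getLastD_Xb hn (b :: s) (by simp) (!g)]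
      show (!g ^^ decide ((s.length + 1 - 1) % 2 = 1))
        = (g ^^ decide ((s.length + 2 - 1) % 2 = 1))
      have h1 : s.length + 1 - 1 = s.length := by omega
      have h2 : s.length + 2 - 1 = s.length + 1 := by omega
      rw [h1, h2]
      rcases Nat.even_or_odd s.length with he | ho
      · have e1 : s.length % 2 = 0 := Nat.even_iff.mp he
        have e2 : (s.length + 1) % 2 = 1 := by omega
        rw [e1, e2]
        cases g <;> rfl
      · have e1 : s.length % 2 = 1 := Nat.odd_iff.mp ho
        have e2 : (s.length + 1) % 2 = 0 := by omega
        rw [e1, e2]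
        cases g <;> rfl

/-! ### Bridge to the numeric world -/

def val (n : ℕ) (b : Bool) : ℕ := if b then n else 1

lemma expand1_val {n : ℕ} (hn : 2 ≤ n) : ∀ (s : List Bool) (g : Bool),
    expand1 1 n (val n g) (s.map (val n)) = (Xb n g s).map (val n)
  | [], g => by simp [expand1, Xb_nil]
  | a :: s, g => by
      have hx : 1 + n - val n g = val n (!g) := by
        cases g <;> simp [val] <;> omega
      simp only [List.map_cons, expand1, hx, Xb_cons, List.map_append, List.map_replicate]
      rw [expand1_val hn s (!g)]
      cases a <;> rfl

lemma expand_val {n : ℕ} (hn : 2 ≤ n) : ∀ (bs s : List Bool),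
    expand 1 n (s.map (val n)) (bs.map (val n)) = (chain n s bs).map (val n)
  | [], s => rfl
  | g :: bs, s => by
      simp only [List.map_cons, expand, chain_cons]
      rw [expand1_val hn s g, expand_val hn bs _]

lemma getLastD_map_val' {n : ℕ} : ∀ (w : List Bool) (b : Bool),
    (w.map (val n)).getLastD (val n b) = val n (w.getLastD b)
  | [], _ => rfl
  | a :: w, b => by
      simp only [List.map_cons, List.getLastD_cons]
      exact getLastD_map_val' w a

lemma getLastD_map_val {n : ℕ} (w : List Bool) (hw : w ≠ []) :
    (w.map (val n)).getLastD 0 = val n (w.getLastD false) := by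
  have hmw : w.map (val n) ≠ [] := by
    cases w with
    | nil => exact absurd rfl hw
    | cons a l => simp
  rw [getLastD_irrel (w.map (val n)) hmw 0 (val n false), getLastD_map_val' w false]

/-- Main auxiliary result, for `n ≤ n'`. -/
lemma main_aux {e n n' : ℕ} (hn : 2 ≤ n) (hn' : 2 ≤ n') (hle : n ≤ n')
    (hdvd : 2 ^ e ∣ n' - n) (bs : List Bool) (hbs : bs.length ≤ 2 * e + 1)
    (s : List Bool) (hs : s ≠ []) :
    keepOnes (torsion 1 n (s.map (val n)) (bs.map (val n))) =
      keepOnes (torsion 1 n' (s.map (val n')) (bs.map (val n'))) := by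
  have hn0 : 0 < n := by omega
  have hn'0 : 0 < n' := by omega
  unfold torsion keepOnes
  simp only [List.map_map, List.length_map]
  apply List.map_congr_left
  intro k hk
  rw [List.mem_range] at hk
  simp only [Function.comp_apply]
  have htake : ∀ m : ℕ, (bs.map (val m)).take (k + 1) = (bs.take (k + 1)).map (val m) := by
    intro m; rw [List.map_take]
  rw [htake n, htake n', expand_val hn _ s, expand_val hn' _ s]
  set pre := bs.take (k + 1) with hpre
  have hprene : pre ≠ [] := by
    have : pre.length = min (k + 1) bs.length := by rw [hpre, List.length_take]
    intro h
    rw [h] at this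
    simp only [List.length_nil] at this
    omega
  have hc1 : chain n s pre ≠ [] := chain_ne_nil hn0 pre s hs
  have hc2 : chain n' s pre ≠ [] := chain_ne_nil hn'0 pre s hs
  rw [getLastD_map_val _ hc1, getLastD_map_val _ hc2]
  -- decompose pre = qs ++ [g]
  obtain ⟨qs, g, hqs⟩ : ∃ qs g, pre = qs ++ [g] := by
    rcases List.eq_nil_or_concat pre with h | ⟨qs, g, h⟩
    · exact absurd h hprene
    · exact ⟨qs, g, by simpa [List.concat_eq_append] using h⟩
  have hlast : (chain n s pre).getLastD false = (chain n' s pre).getLastD false := by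
    rw [hqs, chain_append, chain_append, chain_cons, chain_cons, chain_nil, chain_nil]
    have hq1 : chain n s qs ≠ [] := chain_ne_nil hn0 qs s hs
    have hq2 : chain n' s qs ≠ [] := chain_ne_nil hn'0 qs s hs
    rw [getLastD_Xb hn0 _ hq1 g, getLastD_Xb hn'0 _ hq2 g]
    have hqlen : qs.length ≤ 2 * e := by
      have : pre.length = min (k + 1) bs.length := by rw [hpre, List.length_take]
      have hplen : pre.length ≤ k + 1 := by omega
      have : qs.length + 1 = pre.length := by rw [hqs]; simp
      omega
    have hpar := chain_parity hn0 hn'0 hle hdvd s qs hqlen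
    have hl1 : 1 ≤ (chain n s qs).length := List.length_pos_iff.mpr hq1
    have hl2 : 1 ≤ (chain n' s qs).length := List.length_pos_iff.mpr hq2
    have : ((chain n s qs).length - 1) % 2 = ((chain n' s qs).length - 1) % 2 := by omega
    rw [this]
  rw [hlast]
  cases (chain n' s pre).getLastD false with
  | true =>
      rw [show val n true = n from rfl, show val n' true = n' from rfl]
      have h1 : 1 + n - n = 1 := by omega
      have h2 : 1 + n' - n' = 1 := by omega
      rw [h1, h2]
  | false =>
      rw [show val n false = 1 from rfl, show val n' false = 1 from rfl]
      have h1 : 1 + n - 1 = n := by omega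
      have h2 : 1 + n' - 1 = n' := by omega
      rw [h1, h2, if_neg (by omega : ¬ n = 1), if_neg (by omega : ¬ n' = 1)]

lemma substZeros_eq {n : ℕ} (t : List ℕ) (htv : ∀ a ∈ t, a = 1 ∨ a = 0) :
    substZeros n t = (t.map fun a => decide (a = 0)).map (val n) := by
  unfold substZeros
  rw [List.map_map]
  apply List.map_congr_left
  intro a ha
  rcases htv a ha with h | h <;> subst h <;> simp [val]

end TMI

/-- For `j > 0`, positive even `n ≡ n' (mod 2^{j-1})`, `1 ≤ k ≤ 2j - 1`, and
`t ∈ {1, 0}^k`: (a) `F(C_{1,n}(1, Gₙ(t))) = F(C_{1,n'}(1, G_{n'}(t)))` and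
(b) `F(C_{1,n}(n, Gₙ(t))) = F(C_{1,n'}(n', G_{n'}(t)))`. -/
theorem torsion_mod_invariant (j n n' k : ℕ) (hj : 0 < j)
    (hn : 0 < n) (hn' : 0 < n') (hne : Even n) (hne' : Even n')
    (hmod : n ≡ n' [MOD 2 ^ (j - 1)])
    (hk1 : 1 ≤ k) (hk2 : k ≤ 2 * j - 1)
    (t : List ℕ) (htl : t.length = k) (htv : ∀ a ∈ t, a = 1 ∨ a = 0) :
    keepOnes (torsion 1 n [1] (substZeros n t)) =
      keepOnes (torsion 1 n' [1] (substZeros n' t)) ∧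
    keepOnes (torsion 1 n [n] (substZeros n t)) =
      keepOnes (torsion 1 n' [n'] (substZeros n' t)) := by
  have hn2 : 2 ≤ n := by
    rcases hne with ⟨c, hc⟩; omega
  have hn2' : 2 ≤ n' := by
    rcases hne' with ⟨c, hc⟩; omega
  set e := j - 1 with he
  set bs : List Bool := t.map fun a => decide (a = 0) with hbs
  have hbslen : bs.length ≤ 2 * e + 1 := by
    rw [hbs, List.length_map, htl]
    omega
  have hsub : ∀ m : ℕ, substZeros m t = bs.map (TMI.val m) := fun m =>
    TMI.substZeros_eq t htv
  have key : ∀ s : List Bool, s ≠ [] →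
      keepOnes (torsion 1 n (s.map (TMI.val n)) (bs.map (TMI.val n))) =
        keepOnes (torsion 1 n' (s.map (TMI.val n')) (bs.map (TMI.val n'))) := by
    intro s hs
    rcases le_total n n' with hle | hle
    · have hdvd : 2 ^ e ∣ n' - n := (Nat.modEq_iff_dvd' hle).mp hmod
      exact TMI.main_aux hn2 hn2' hle hdvd bs hbslen s hs
    · have hdvd : 2 ^ e ∣ n - n' := (Nat.modEq_iff_dvd' hle).mp hmod.symm
      exact (TMI.main_aux hn2' hn2 hle hdvd bs hbslen s hs).symm
  constructor
  · have h := key [false] (by simp)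
    simpa [TMI.val, hsub] using h
  · have h := key [true] (by simp)
    simpa [TMI.val, hsub] using h
end

section
/- Let m and n be distinct integers (possibly nonpositive) and let x be an integer. Then for every k > 0, the generalized torsion map t ↦ C_{m,n}(x, t) is a length-preserving bijection from {m, n}^k to {m, n}^k, and the orbit of every t in {m, n}^k under this map has length dividing 2^{⌈k/2⌉}. -/
/-- Prepend a term to a list of length `k`, giving a list of length `k + 1`. -/
def gtCons (a : ℤ) {k : ℕ} (y : {l : List ℤ // l.length = k}) :
    {l : List ℤ // l.length = k + 1} :=
  ⟨a :: y.1, by simp [y.2]⟩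

/-- The tail of a list of length `k + 1`, as a list of length `k`. -/
def gtTail {k : ℕ} (t : {l : List ℤ // l.length = k + 1}) : {l : List ℤ // l.length = k} :=
  ⟨t.1.tail, by simp [t.2]⟩

/-- The generalized torsion map `C_{m,n}(x, −)` on sequences of length `k`, as a
permutation, defined by induction on `k`:  `C_{m,n}(x, t₁ t') = (m + n − t₁) ·
(C_{m,n}(t₁, −))^x (t')`, where the `x`-th iterate (`x ∈ ℤ`, possibly negative) is the
`zpow` of the permutation `C_{m,n}(t₁, −)` of length-`(k-1)` sequences. -/
def gtPerm (m n : ℤ) : (k : ℕ) → ℤ → Equiv.Perm {l : List ℤ // l.length = k}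
  | 0, _ => Equiv.refl _
  | k + 1, x =>
    { toFun := fun t =>
        gtCons (m + n - t.1.headD 0) ((gtPerm m n k (t.1.headD 0) ^ x) (gtTail t))
      invFun := fun u =>
        gtCons (m + n - u.1.headD 0) ((gtPerm m n k (m + n - u.1.headD 0) ^ (-x)) (gtTail u))
      left_inv := by
        rintro ⟨l, hl⟩
        obtain ⟨a, l', rfl⟩ : ∃ a l', l = a :: l' := by
          cases l with
          | nil => simp at hl
          | cons a l' => exact ⟨a, l', rfl⟩
        simp only [gtCons, gtTail, List.headD_cons, List.tail_cons, sub_sub_cancel,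
          Subtype.coe_eta, ← Equiv.Perm.mul_apply, ← zpow_add, neg_add_cancel, zpow_zero,
          Equiv.Perm.coe_one, id_eq]
      right_inv := by
        rintro ⟨l, hl⟩
        obtain ⟨a, l', rfl⟩ : ∃ a l', l = a :: l' := by
          cases l with
          | nil => simp at hl
          | cons a l' => exact ⟨a, l', rfl⟩
        simp only [gtCons, gtTail, List.headD_cons, List.tail_cons, sub_sub_cancel,
          Subtype.coe_eta, ← Equiv.Perm.mul_apply, ← zpow_add, add_neg_cancel, zpow_zero,
          Equiv.Perm.coe_one, id_eq] }

/-- The generalized torsion `C_{m,n}(x, t)` for arbitrary integers `m ≠ n` and `x`. -/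
def gtorsion (m n : ℤ) (x : ℤ) (t : List ℤ) : List ℤ :=
  (gtPerm m n t.length x ⟨t, rfl⟩).1

namespace GT

variable (m n : ℤ)

abbrev L (k : ℕ) := {l : List ℤ // l.length = k}

abbrev OnMN (l : List ℤ) : Prop := ∀ a ∈ l, a = m ∨ a = n

def sw (ε : Bool) (a : ℤ) : ℤ := if ε then m + n - a else a

def Good : (k : ℕ) → Equiv.Perm (L k) → Bool → Prop
  | 0, _, _ => True
  | k+1, f, ε => ∃ (g : ℤ → Equiv.Perm (L k)) (δ : Bool),
      Good k (g m) δ ∧ Good k (g n) δ ∧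
      ∀ a, (a = m ∨ a = n) → ∀ t : L k, OnMN m n t.1 →
        f (gtCons a t) = gtCons (sw m n ε a) (g a t)

lemma sw_mem {a : ℤ} (ha : a = m ∨ a = n) (ε : Bool) : sw m n ε a = m ∨ sw m n ε a = n := by
  rcases ha with rfl | rfl <;> cases ε <;> simp [sw] <;> omega

lemma sw_sw (ε ε' : Bool) (a : ℤ) : sw m n ε (sw m n ε' a) = sw m n (Bool.xor ε ε') a := by
  cases ε <;> cases ε' <;> simp [sw] <;> ring

lemma good_index {k} {g : ℤ → Equiv.Perm (L k)} {δ} (h1 : Good m n k (g m) δ)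
    (h2 : Good m n k (g n) δ) {a} (ha : a = m ∨ a = n) : Good m n k (g a) δ := by
  rcases ha with rfl | rfl <;> assumption

lemma exists_cons {k : ℕ} (l : List ℤ) (hl : l.length = k + 1) :
    ∃ (a : ℤ) (t' : L k), (⟨l, hl⟩ : L (k+1)) = gtCons a t' := by
  cases l with
  | nil => simp at hl
  | cons a l' => exact ⟨a, ⟨l', by simpa using hl⟩, rfl⟩

lemma good_mem : ∀ (k) (f : Equiv.Perm (L k)) (ε), Good m n k f ε →
    ∀ t : L k, OnMN m n t.1 → OnMN m n (f t).1 := by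
  intro k
  induction k with
  | zero =>
    intro f ε _ t _ b hb
    rw [List.length_eq_zero_iff.mp (f t).2] at hb
    simp at hb
  | succ k ih =>
    rintro f ε ⟨g, δ, hgm, hgn, hf⟩ ⟨l, hl⟩ ht
    obtain ⟨a, t', hdec⟩ := exists_cons l hl
    have hl2 : l = a :: t'.1 := congrArg Subtype.val hdec
    have ha : a = m ∨ a = n := by
      apply ht; show a ∈ l; rw [hl2]; exact List.mem_cons_self
    have ht' : OnMN m n t'.1 := by
      intro b hb
      apply ht; show b ∈ l; rw [hl2]
      exact List.mem_cons_of_mem _ hb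
    rw [hdec, hf a ha t' ht']
    intro b hb
    rcases List.mem_cons.mp hb with rfl | hb
    · exact sw_mem m n ha ε
    · exact ih (g a) δ (good_index m n hgm hgn ha) t' ht' b hb

lemma good_mem_inv : ∀ (k) (f : Equiv.Perm (L k)) (ε), Good m n k f ε →
    ∀ t : L k, OnMN m n t.1 → OnMN m n (f⁻¹ t).1 := by
  intro k
  induction k with
  | zero =>
    intro f ε _ t _ b hb
    rw [List.length_eq_zero_iff.mp ((f⁻¹) t).2] at hb
    simp at hb
  | succ k ih =>
    rintro f ε ⟨g, δ, hgm, hgn, hf⟩ ⟨l, hl⟩ ht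
    obtain ⟨a, t', hdec⟩ := exists_cons l hl
    have hl2 : l = a :: t'.1 := congrArg Subtype.val hdec
    have ha : a = m ∨ a = n := by
      apply ht; show a ∈ l; rw [hl2]; exact List.mem_cons_self
    have ht' : OnMN m n t'.1 := by
      intro b hb
      apply ht; show b ∈ l; rw [hl2]
      exact List.mem_cons_of_mem _ hb
    have ha' : sw m n ε a = m ∨ sw m n ε a = n := sw_mem m n ha ε
    have hu : OnMN m n (((g (sw m n ε a))⁻¹) t').1 :=
      ih (g (sw m n ε a)) δ (good_index m n hgm hgn ha') t' ht'
    have key : f (gtCons (sw m n ε a) ((g (sw m n ε a))⁻¹ t')) = gtCons a t' := by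
      rw [hf _ ha' _ hu, sw_sw, Bool.xor_self, Equiv.Perm.inv_def (g (sw m n ε a)), Equiv.apply_symm_apply]
      simp [sw]
    rw [hdec, ← key, Equiv.Perm.inv_def f, Equiv.symm_apply_apply]
    intro b hb
    rcases List.mem_cons.mp hb with rfl | hb
    · exact ha'
    · exact hu b hb

lemma good_one : ∀ k, Good m n k (1 : Equiv.Perm (L k)) false
  | 0 => trivial
  | k+1 => ⟨fun _ => 1, false, good_one k, good_one k, fun a _ t _ => by simp [sw]⟩

lemma good_mul : ∀ (k) (f f' : Equiv.Perm (L k)) (ε ε'), Good m n k f ε → Good m n k f' ε' →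
    Good m n k (f * f') (Bool.xor ε ε') := by
  intro k
  induction k with
  | zero => intros; trivial
  | succ k ih =>
    rintro f f' ε ε' ⟨g, δ, hgm, hgn, hf⟩ ⟨g', δ', hg'm, hg'n, hf'⟩
    refine ⟨fun a => g (sw m n ε' a) * g' a, Bool.xor δ δ', ?_, ?_, ?_⟩
    · exact ih _ _ _ _ (good_index m n hgm hgn (sw_mem m n (Or.inl rfl) ε')) hg'm
    · exact ih _ _ _ _ (good_index m n hgm hgn (sw_mem m n (Or.inr rfl) ε')) hg'n
    · intro a ha t ht
      have h2 := hf (sw m n ε' a) (sw_mem m n ha ε') (g' a t)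
        (good_mem m n k (g' a) δ' (good_index m n hg'm hg'n ha) t ht)
      simp only [Equiv.Perm.mul_apply, hf' a ha t ht, h2, sw_sw]

lemma good_inv : ∀ (k) (f : Equiv.Perm (L k)) (ε), Good m n k f ε → Good m n k f⁻¹ ε := by
  intro k
  induction k with
  | zero => intros; trivial
  | succ k ih =>
    rintro f ε ⟨g, δ, hgm, hgn, hf⟩
    refine ⟨fun a => (g (sw m n ε a))⁻¹, δ, ?_, ?_, ?_⟩
    · exact ih _ _ (good_index m n hgm hgn (sw_mem m n (Or.inl rfl) ε))
    · exact ih _ _ (good_index m n hgm hgn (sw_mem m n (Or.inr rfl) ε))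
    · intro a ha t ht
      have ha' : sw m n ε a = m ∨ sw m n ε a = n := sw_mem m n ha ε
      have hu : OnMN m n (((g (sw m n ε a))⁻¹) t).1 :=
        good_mem_inv m n k (g (sw m n ε a)) δ (good_index m n hgm hgn ha') t ht
      have key : f (gtCons (sw m n ε a) ((g (sw m n ε a))⁻¹ t)) = gtCons a t := by
        rw [hf _ ha' _ hu, sw_sw, Bool.xor_self, Equiv.Perm.inv_def (g (sw m n ε a)), Equiv.apply_symm_apply]
        simp [sw]
      rw [← key, Equiv.Perm.inv_def f, Equiv.symm_apply_apply]

lemma good_pow (k) (f : Equiv.Perm (L k)) (ε) (h : Good m n k f ε) :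
    ∀ j : ℕ, Good m n k (f ^ j) (if Even j then false else ε) := by
  intro j
  induction j with
  | zero => simpa using good_one m n k
  | succ j ihj =>
    have h2 := good_mul m n k (f ^ j) f _ ε ihj h
    rw [← pow_succ] at h2
    have hpar : (if Even (j+1) then false else ε) =
        Bool.xor (if Even j then false else ε) ε := by
      by_cases hj : Even j <;> simp [Nat.even_add_one, hj]
    rw [hpar]
    exact h2

lemma good_zpow (k) (f : Equiv.Perm (L k)) (ε) (h : Good m n k f ε) (x : ℤ) :
    Good m n k (f ^ x) (if Even x then false else ε) := by
  rcases x with j | j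
  · rw [Int.ofNat_eq_coe, zpow_natCast]
    have := good_pow m n k f ε h j
    rwa [show (if Even ((j:ℤ)) then false else ε) = (if Even j then false else ε) by
      simp [Int.even_coe_nat]]
  · rw [zpow_negSucc]
    have := good_inv m n k _ _ (good_pow m n k f ε h (j+1))
    rwa [show (if Even (Int.negSucc j) then false else ε) = (if Even (j+1) then false else ε) by
      rw [Int.negSucc_eq]; simp [Int.even_coe_nat, parity_simps]]

lemma gtPerm_good : ∀ (k) (x : ℤ), Good m n k (gtPerm m n k x) true
  | 0, x => trivial
  | k+1, x => by
    refine ⟨fun a => gtPerm m n k a ^ x, if Even x then false else true, ?_, ?_, ?_⟩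
    · exact good_zpow m n k _ _ (gtPerm_good k m) x
    · exact good_zpow m n k _ _ (gtPerm_good k n) x
    · intro a ha t ht
      simp only [gtPerm, Equiv.coe_fn_mk, gtCons, gtTail, List.headD_cons, List.tail_cons,
        Subtype.coe_eta, sw, if_true]

lemma mapsTo_pow {k} {G : Equiv.Perm (L k)} (hG : ∀ t : L k, OnMN m n t.1 → OnMN m n (G t).1) :
    ∀ (j) (t : L k), OnMN m n t.1 → OnMN m n ((G ^ j) t).1 := by
  intro j
  induction j with
  | zero => intro t ht; simpa using ht
  | succ j ihj =>
    intro t ht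
    rw [pow_succ', Equiv.Perm.mul_apply]
    exact hG _ (ihj t ht)

lemma pow_cons {k} (f : Equiv.Perm (L (k+1))) (G : Equiv.Perm (L k)) (a : ℤ)
    (hG : ∀ t : L k, OnMN m n t.1 → OnMN m n (G t).1)
    (hf : ∀ t : L k, OnMN m n t.1 → f (gtCons a t) = gtCons a (G t)) :
    ∀ (j) (t : L k), OnMN m n t.1 → (f ^ j) (gtCons a t) = gtCons a ((G ^ j) t) := by
  intro j
  induction j with
  | zero => intro t ht; simp
  | succ j ihj =>
    intro t ht
    rw [pow_succ', Equiv.Perm.mul_apply, ihj t ht, hf _ (mapsTo_pow m n hG j t ht),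
      ← Equiv.Perm.mul_apply, ← pow_succ']

lemma fix_pow_mul {α : Type*} (f : Equiv.Perm α) (N : ℕ) (t : α) (h : (f ^ N) t = t) :
    ∀ c, (f ^ (N * c)) t = t := by
  intro c
  induction c with
  | zero => simp
  | succ c ihc => rw [Nat.mul_succ, pow_add, Equiv.Perm.mul_apply, h, ihc]

lemma good_fix : ∀ (k) (f : Equiv.Perm (L k)) (ε), Good m n k f ε →
    (∀ t : L k, OnMN m n t.1 → (f ^ (2 ^ ((k+1)/2))) t = t) ∧
    (ε = false → ∀ t : L k, OnMN m n t.1 → (f ^ (2 ^ (k/2))) t = t) := by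
  intro k
  induction k with
  | zero =>
    intro f ε _
    have hsub : ∀ u v : L 0, u = v := by
      rintro ⟨l, hl⟩ ⟨l', hl'⟩
      simp [List.length_eq_zero_iff.mp hl, List.length_eq_zero_iff.mp hl']
    exact ⟨fun t _ => hsub _ _, fun _ t _ => hsub _ _⟩
  | succ k ih =>
    have claim2 : ∀ (f : Equiv.Perm (L (k+1))), Good m n (k+1) f false →
        ∀ t : L (k+1), OnMN m n t.1 → (f ^ (2 ^ ((k+1)/2))) t = t := by
      rintro f ⟨g, δ, hgm, hgn, hf⟩ ⟨l, hl⟩ ht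
      obtain ⟨a, t', hdec⟩ := exists_cons l hl
      have hl2 : l = a :: t'.1 := congrArg Subtype.val hdec
      have ha : a = m ∨ a = n := by
        apply ht; show a ∈ l; rw [hl2]; exact List.mem_cons_self
      have ht' : OnMN m n t'.1 := by
        intro b hb
        apply ht; show b ∈ l; rw [hl2]
        exact List.mem_cons_of_mem _ hb
      have hga : Good m n k (g a) δ := good_index m n hgm hgn ha
      have hfa : ∀ u : L k, OnMN m n u.1 → f (gtCons a u) = gtCons a ((g a) u) := by
        intro u hu
        rw [hf a ha u hu]
        simp [sw]
      rw [hdec, pow_cons m n f (g a) a (good_mem m n k (g a) δ hga) hfa _ t' ht',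
        (ih (g a) δ hga).1 t' ht']
    intro f ε hgood
    refine ⟨?_, fun hε => by subst hε; exact claim2 f hgood⟩
    cases ε with
    | false =>
      intro t ht
      have hN : (2:ℕ) ^ ((k+1+1)/2) = 2 ^ ((k+1)/2) * 2 ^ ((k+1+1)/2 - (k+1)/2) := by
        rw [← pow_add]; congr 1; omega
      rw [hN]
      exact fix_pow_mul _ _ _ (claim2 f hgood t ht) _
    | true =>
      obtain ⟨g, δ, hgm, hgn, hf⟩ := hgood
      rintro ⟨l, hl⟩ ht
      obtain ⟨a, t', hdec⟩ := exists_cons l hl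
      have hl2 : l = a :: t'.1 := congrArg Subtype.val hdec
      have ha : a = m ∨ a = n := by
        apply ht; show a ∈ l; rw [hl2]; exact List.mem_cons_self
      have ht' : OnMN m n t'.1 := by
        intro b hb
        apply ht; show b ∈ l; rw [hl2]
        exact List.mem_cons_of_mem _ hb
      have ha' : sw m n true a = m ∨ sw m n true a = n := sw_mem m n ha true
      set G : Equiv.Perm (L k) := g (sw m n true a) * g a with hG
      have hGgood : Good m n k G false := by
        have := good_mul m n k _ _ δ δ (good_index m n hgm hgn ha') (good_index m n hgm hgn ha)
        simpa using this
      have key : ∀ u : L k, OnMN m n u.1 → (f * f) (gtCons a u) = gtCons a (G u) := by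
        intro u hu
        rw [Equiv.Perm.mul_apply, hf a ha u hu,
          hf (sw m n true a) ha' ((g a) u)
            (good_mem m n k (g a) δ (good_index m n hgm hgn ha) u hu),
          sw_sw]
        simp [hG, sw, Equiv.Perm.mul_apply]
      have hexp : (2:ℕ) ^ ((k+1+1)/2) = 2 * 2 ^ (k/2) := by
        rw [show (k+1+1)/2 = k/2 + 1 by omega, pow_succ]; ring
      rw [hdec, hexp, pow_mul, pow_two,
        pow_cons m n (f * f) G a (good_mem m n k G false hGgood) key _ t' ht',
        (ih G false hGgood).2 rfl t' ht']


lemma gtorsion_eq (x : ℤ) {t : List ℤ} {k : ℕ} (ht : t.length = k) :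
    gtorsion m n x t = (gtPerm m n k x ⟨t, ht⟩).1 := by
  subst ht; rfl

lemma gtorsion_iterate (x : ℤ) :
    ∀ (j k : ℕ) (t : List ℤ) (ht : t.length = k),
      (gtorsion m n x)^[j] t = (((gtPerm m n k x) ^ j) ⟨t, ht⟩).1 := by
  intro j
  induction j with
  | zero => intro k t ht; rfl
  | succ j ihj =>
    intro k t ht
    rw [Function.iterate_succ_apply', ihj k t ht,
      gtorsion_eq m n x (((gtPerm m n k x) ^ j) ⟨t, ht⟩).2, Subtype.coe_eta,
      ← Equiv.Perm.mul_apply, ← pow_succ']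

end GT

/-- For distinct integers `m ≠ n` (possibly nonpositive) and any integer `x`, the
generalized torsion map `t ↦ C_{m,n}(x, t)` is a length-preserving bijection from
`{m, n}^k` to `{m, n}^k`, and every orbit has length dividing `2^⌈k/2⌉`. -/
theorem gtorsion_bijOn_and_orbit_dvd (m n : ℤ) (hmn : m ≠ n) (x : ℤ) (k : ℕ) (hk : 0 < k) :
    (∀ t : List ℤ, (gtorsion m n x t).length = t.length) ∧
    Set.BijOn (gtorsion m n x)
      {t : List ℤ | t.length = k ∧ ∀ a ∈ t, a = m ∨ a = n}
      {t : List ℤ | t.length = k ∧ ∀ a ∈ t, a = m ∨ a = n} ∧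
    (∀ t : List ℤ, t.length = k → (∀ a ∈ t, a = m ∨ a = n) →
      Function.minimalPeriod (gtorsion m n x) t ∣ 2 ^ ((k + 1) / 2)) := by
  have hlen : ∀ t : List ℤ, (gtorsion m n x t).length = t.length :=
    fun t => (gtPerm m n t.length x ⟨t, rfl⟩).2
  have hgood := GT.gtPerm_good m n k x
  refine ⟨hlen, ⟨?_, ?_, ?_⟩, ?_⟩
  · -- MapsTo
    rintro t ⟨ht1, ht2⟩
    rw [Set.mem_setOf_eq, GT.gtorsion_eq m n x ht1]
    exact ⟨(gtPerm m n k x ⟨t, ht1⟩).2, GT.good_mem m n k _ true hgood ⟨t, ht1⟩ ht2⟩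
  · -- InjOn
    rintro t ⟨ht1, _⟩ t' ⟨ht1', _⟩ heq
    rw [GT.gtorsion_eq m n x ht1, GT.gtorsion_eq m n x ht1'] at heq
    have := (gtPerm m n k x).injective (Subtype.ext heq)
    exact congrArg Subtype.val this
  · -- SurjOn
    rintro u ⟨hu1, hu2⟩
    refine ⟨((gtPerm m n k x)⁻¹ ⟨u, hu1⟩).1,
      ⟨((gtPerm m n k x)⁻¹ ⟨u, hu1⟩).2, GT.good_mem_inv m n k _ true hgood ⟨u, hu1⟩ hu2⟩, ?_⟩
    rw [GT.gtorsion_eq m n x ((gtPerm m n k x)⁻¹ ⟨u, hu1⟩).2, Subtype.coe_eta,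
      Equiv.Perm.inv_def (gtPerm m n k x), Equiv.apply_symm_apply]
  · -- minimalPeriod
    intro t htl htv
    have hiter : (gtorsion m n x)^[2 ^ ((k + 1) / 2)] t = t := by
      rw [GT.gtorsion_iterate m n x _ k t htl,
        (GT.good_fix m n k _ true hgood).1 ⟨t, htl⟩ htv]
    exact Function.IsPeriodicPt.minimalPeriod_dvd hiter
end
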